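/- arXiv:2305.00511 — 17 statements merged into one kernel-verified Lean document; each statement's English description precedes it below -/
import Mathlib

section
/- A partially ordered metric space (X, d, ≽) has the monotone Lipschitz extension property if and only if it is radial. -/
/-- **Theorem 2.** A partially ordered metric space has the monotone Lipschitz
extension property if and only if it is radial. Here `r x y` means `x ≽ y`. -/
theorem monotoneLipschitzExtensionProperty_iff_radial {X : Type*} [MetricSpace X]
    (r : X → X → Prop)
    (hrefl : ∀ x, r x x)
    (htrans : ∀ x y z, r x y → r y z → r x z)
    (hantisymm : ∀ x y, r x y → r y x → x = y) :
    (∀ S : Set X, S.Nonempty → ∀ K : ℝ, 0 < K → ∀ f : X → ℝ,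
      (∀ x ∈ S, ∀ y ∈ S, r x y → f y ≤ f x) →
      (∀ x ∈ S, ∀ y ∈ S, |f x - f y| ≤ K * dist x y) →
      ∃ F : X → ℝ, (∀ x y, r x y → F y ≤ F x) ∧
        (∀ x y, |F x - F y| ≤ K * dist x y) ∧ ∀ x ∈ S, F x = f x) ↔
    ((∀ x y z, ¬ r y x → r y z ∧ y ≠ z → dist x y ≤ dist x z) ∧
      (∀ x y z, r x y ∧ x ≠ y → ¬ r z y → dist y z ≤ dist x z)) := by
  classical
  constructor
  · -- extension property → radial
    intro hext
    constructor
    · -- condition (i)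
      rintro x y z hyx ⟨hyz, _hne⟩
      by_contra h
      push_neg at h  -- h : dist x z < dist x y
      have hxy : x ≠ y := by rintro rfl; exact hyx (hrefl x)
      set f : X → ℝ := fun w => if w = x then dist x y else 0 with hf
      have hfx : f x = dist x y := by simp [hf]
      have hfy : f y = 0 := by simp [hf, Ne.symm hxy]
      have hmono : ∀ a ∈ ({x, y} : Set X), ∀ b ∈ ({x, y} : Set X), r a b → f b ≤ f a := by
        rintro a (rfl | rfl) b (rfl | rfl) hab
        · exact le_refl _
        · rw [hfx, hfy]; exact dist_nonneg
        · exact absurd hab hyx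
        · exact le_refl _
      have hlip : ∀ a ∈ ({x, y} : Set X), ∀ b ∈ ({x, y} : Set X),
          |f a - f b| ≤ 1 * dist a b := by
        rintro a (rfl | rfl) b (rfl | rfl)
        · simp [dist_nonneg]
        · rw [hfx, hfy, sub_zero, one_mul, abs_of_nonneg dist_nonneg]
        · rw [abs_sub_comm, hfx, hfy, sub_zero, abs_of_nonneg dist_nonneg, one_mul, dist_comm]
        · simp [dist_nonneg]
      obtain ⟨F, hFmono, hFlip, hFeq⟩ := hext {x, y} ⟨x, by simp⟩ 1 one_pos f hmono hlip
      have hFx : F x = dist x y := by rw [hFeq x (by simp), hfx]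
      have hFy : F y = 0 := by rw [hFeq y (by simp), hfy]
      have h1 : F z ≤ F y := hFmono y z hyz
      have h2 : |F x - F z| ≤ 1 * dist x z := hFlip x z
      have h3 := (abs_sub_le_iff.mp h2).1
      rw [hFx, hFy, one_mul] at *
      linarith
    · -- condition (ii)
      rintro x y z ⟨hxy, _hne⟩ hzy
      by_contra h
      push_neg at h  -- h : dist x z < dist y z
      have hyz : y ≠ z := by rintro rfl; exact hzy (hrefl y)
      set f : X → ℝ := fun w => if w = y then dist y z else 0 with hf
      have hfy : f y = dist y z := by simp [hf]
      have hfz : f z = 0 := by simp [hf, Ne.symm hyz]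
      have hmono : ∀ a ∈ ({y, z} : Set X), ∀ b ∈ ({y, z} : Set X), r a b → f b ≤ f a := by
        rintro a (rfl | rfl) b (rfl | rfl) hab
        · exact le_refl _
        · rw [hfy, hfz]; exact dist_nonneg
        · exact absurd hab hzy
        · exact le_refl _
      have hlip : ∀ a ∈ ({y, z} : Set X), ∀ b ∈ ({y, z} : Set X),
          |f a - f b| ≤ 1 * dist a b := by
        rintro a (rfl | rfl) b (rfl | rfl)
        · simp [dist_nonneg]
        · rw [hfy, hfz, sub_zero, one_mul, abs_of_nonneg dist_nonneg]
        · rw [abs_sub_comm, hfy, hfz, sub_zero, abs_of_nonneg dist_nonneg, one_mul, dist_comm]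
        · simp [dist_nonneg]
      obtain ⟨F, hFmono, hFlip, hFeq⟩ := hext {y, z} ⟨y, by simp⟩ 1 one_pos f hmono hlip
      have hFy : F y = dist y z := by rw [hFeq y (by simp), hfy]
      have hFz : F z = 0 := by rw [hFeq z (by simp), hfz]
      have h1 : F y ≤ F x := hFmono x y hxy
      have h2 : |F x - F z| ≤ 1 * dist x z := hFlip x z
      have h3 := (abs_sub_le_iff.mp h2).1
      rw [hFy, hFz, one_mul] at *
      linarith
  · -- radial → extension property
    rintro ⟨rad1, rad2⟩ S hS K hK f hmono hlip
    obtain ⟨s0, hs0⟩ := hS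
    set c : X → X → ℝ := fun x s => if r s x then 0 else dist x s with hc
    have hc_nonneg : ∀ x s, 0 ≤ c x s := by
      intro x s
      simp only [hc]
      split
      · exact le_refl 0
      · exact dist_nonneg
    -- c is antitone in x w.r.t. the order
    have hcmono : ∀ x y s, r x y → c y s ≤ c x s := by
      intro x y s hxy
      by_cases hsy : r s y
      · rw [show c y s = 0 from if_pos hsy]; exact hc_nonneg x s
      · have hsx : ¬ r s x := fun h => hsy (htrans s x y h hxy)
        rw [show c y s = dist y s from if_neg hsy,
            show c x s = dist x s from if_neg hsx]
        by_cases hxy' : x = y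
        · subst hxy'; exact le_refl _
        · exact rad2 x y s ⟨hxy, hxy'⟩ hsy
    -- c is 1-Lipschitz in x
    have hclip : ∀ x y s, c x s ≤ c y s + dist x y := by
      intro x y s
      by_cases hsx : r s x
      · rw [show c x s = 0 from if_pos hsx]
        exact add_nonneg (hc_nonneg y s) dist_nonneg
      · rw [show c x s = dist x s from if_neg hsx]
        by_cases hsy : r s y
        · rw [show c y s = 0 from if_pos hsy, zero_add]
          by_cases hsy' : s = y
          · subst hsy'; exact le_refl _
          · exact rad1 x s y hsx ⟨hsy, hsy'⟩
        · rw [show c y s = dist y s from if_neg hsy]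
          calc dist x s ≤ dist x y + dist y s := dist_triangle x y s
            _ = dist y s + dist x y := by ring
    -- key lower bound
    have key : ∀ (x : X), ∀ s ∈ S, f s0 - K * dist x s0 ≤ f s + K * c x s := by
      intro x s hs
      have h0 : 0 ≤ K * c x s := mul_nonneg hK.le (hc_nonneg x s)
      have h0' : 0 ≤ K * dist x s0 := mul_nonneg hK.le dist_nonneg
      by_cases hss0 : r s s0
      · have := hmono s hs s0 hs0 hss0
        linarith
      · by_cases hsx : r s x
        · have hcs : c x s = 0 := if_pos hsx
          by_cases hsx' : s = x
          · subst hsx'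
            have := (abs_sub_le_iff.mp (hlip s hs s0 hs0)).2
            linarith
          · have hd : dist s0 s ≤ dist s0 x := rad1 s0 s x hss0 ⟨hsx, hsx'⟩
            have h1 := (abs_sub_le_iff.mp (hlip s hs s0 hs0)).2
            have h2 : K * dist s s0 ≤ K * dist s0 x :=
              mul_le_mul_of_nonneg_left (by rw [dist_comm s s0]; exact hd) hK.le
            rw [dist_comm x s0]
            linarith
        · have hcs : c x s = dist x s := if_neg hsx
          have h1 := (abs_sub_le_iff.mp (hlip s hs s0 hs0)).2
          have h2 : K * dist s s0 ≤ K * (dist s x + dist x s0) :=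
            mul_le_mul_of_nonneg_left (dist_triangle s x s0) hK.le
          rw [dist_comm s x] at h2
          rw [hcs]
          nlinarith
    set F : X → ℝ := fun x => sInf ((fun s => f s + K * c x s) '' S) with hF
    have hne : ∀ x : X, ((fun s => f s + K * c x s) '' S).Nonempty :=
      fun x => ⟨_, ⟨s0, hs0, rfl⟩⟩
    have hbdd : ∀ x : X, BddBelow ((fun s => f s + K * c x s) '' S) := by
      intro x
      refine ⟨f s0 - K * dist x s0, ?_⟩
      rintro v ⟨s, hs, rfl⟩
      exact key x s hs
    have hFle : ∀ (x : X), ∀ s ∈ S, F x ≤ f s + K * c x s :=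
      fun x s hs => csInf_le (hbdd x) ⟨s, hs, rfl⟩
    have hFge : ∀ (x : X) (b : ℝ), (∀ s ∈ S, b ≤ f s + K * c x s) → b ≤ F x := by
      intro x b hb
      apply le_csInf (hne x)
      rintro v ⟨s, hs, rfl⟩
      exact hb s hs
    have hFlipOne : ∀ x y : X, F x ≤ F y + K * dist x y := by
      intro x y
      have : F x - K * dist x y ≤ F y := by
        apply hFge
        intro s hs
        have h1 := hFle x s hs
        have h2 : K * c x s ≤ K * (c y s + dist x y) :=
          mul_le_mul_of_nonneg_left (hclip x y s) hK.le
        nlinarith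
      linarith
    refine ⟨F, ?_, ?_, ?_⟩
    · -- monotone
      intro x y hxy
      apply le_csInf (hne x)
      rintro v ⟨s, hs, rfl⟩
      show F y ≤ f s + K * c x s
      have h1 := hFle y s hs
      have h2 : K * c y s ≤ K * c x s :=
        mul_le_mul_of_nonneg_left (hcmono x y s hxy) hK.le
      linarith
    · -- Lipschitz
      intro x y
      rw [abs_sub_le_iff]
      constructor
      · have := hFlipOne x y; linarith
      · have := hFlipOne y x; rw [dist_comm y x] at this; linarith
    · -- agrees with f on S
      intro x hx
      apply le_antisymm
      · have h1 := hFle x x hx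
        have h2 : c x x = 0 := if_pos (hrefl x)
        rw [h2, mul_zero, add_zero] at h1
        exact h1
      · apply hFge
        intro s hs
        by_cases hsx : r s x
        · have h1 := hmono s hs x hx hsx
          have h2 : 0 ≤ K * c x s := mul_nonneg hK.le (hc_nonneg x s)
          linarith
        · have hcs : c x s = dist x s := if_neg hsx
          have h1 := (abs_sub_le_iff.mp (hlip x hx s hs)).1
          rw [hcs]
          linarith
end

section
/- Let (X, d, ≽) be a partially ordered metric space that is not radial. Then there exist a two-point subset S ⊆ X and a ≽-increasing 1-Lipschitz function f : S → ℝ such that no 1-Lipschitz function F : X → ℝ extending f is ≽-increasing. -/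
/-- If a partially ordered metric space is not radial, then there is a
two-point set `S = {a, b}` and an order-preserving `1`-Lipschitz function on
`S` none of whose `1`-Lipschitz extensions to `X` is order-preserving.
Here `r x y` means `x ≽ y`. -/
theorem exists_nonextendable_of_not_radial {X : Type*} [MetricSpace X]
    (r : X → X → Prop)
    (hrefl : ∀ x, r x x)
    (htrans : ∀ x y z, r x y → r y z → r x z)
    (hantisymm : ∀ x y, r x y → r y x → x = y)
    (hnotradial : ¬ ((∀ x y z, ¬ r y x → r y z ∧ y ≠ z → dist x y ≤ dist x z) ∧
      (∀ x y z, r x y ∧ x ≠ y → ¬ r z y → dist y z ≤ dist x z))) :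
    ∃ a b : X, a ≠ b ∧ ∃ f : X → ℝ,
      (∀ x ∈ ({a, b} : Set X), ∀ y ∈ ({a, b} : Set X), r x y → f y ≤ f x) ∧
      (∀ x ∈ ({a, b} : Set X), ∀ y ∈ ({a, b} : Set X), |f x - f y| ≤ dist x y) ∧
      ∀ F : X → ℝ, (∀ x y, |F x - F y| ≤ dist x y) →
        (∀ x ∈ ({a, b} : Set X), F x = f x) →
        ¬ (∀ x y, r x y → F y ≤ F x) := by
  rcases not_and_or.mp hnotradial with h | h
  · push_neg at h
    obtain ⟨x, y, z, hyx, ⟨hyz, hne⟩, hd⟩ := h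
    have hxy : x ≠ y := fun e => hyx (e ▸ hrefl x)
    classical
    refine ⟨x, y, hxy, fun w => if w = x then dist x y else 0, ?_, ?_, ?_⟩
    · rintro u (rfl | hu) v (rfl | hv)
      · intro _; simp
      · simp only [Set.mem_singleton_iff] at hv; subst hv
        intro _; simp [hxy.symm, dist_nonneg]
      · simp only [Set.mem_singleton_iff] at hu; subst hu
        intro h'; exact absurd h' hyx
      · simp only [Set.mem_singleton_iff] at hu hv; subst hu; subst hv
        intro _; simp
    · rintro u (rfl | hu) v (rfl | hv)
      · simp
      · simp only [Set.mem_singleton_iff] at hv; subst hv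
        simp [hxy.symm, abs_of_nonneg dist_nonneg]
      · simp only [Set.mem_singleton_iff] at hu; subst hu
        simp [hxy.symm, abs_of_nonneg dist_nonneg, dist_comm]
      · simp only [Set.mem_singleton_iff] at hu hv; subst hu; subst hv; simp
    · intro F hF hext hmono
      have hFx : F x = dist x y := by
        have := hext x (by simp); simpa using this
      have hFy : F y = 0 := by
        have := hext y (by simp); simpa [hxy.symm] using this
      have h1 : F z ≤ 0 := hFy ▸ hmono y z hyz
      have h2 : |F x - F z| ≤ dist x z := hF x z
      have : dist x y - dist x z ≤ F z := by
        have := abs_le.mp h2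
        linarith [this.2, hFx ▸ this.2]
      linarith
  · push_neg at h
    obtain ⟨x, y, z, ⟨hxy, hne⟩, hzy, hd⟩ := h
    have hyz : y ≠ z := fun e => hzy (e ▸ hrefl y)
    classical
    refine ⟨y, z, hyz, fun w => if w = y then dist y z else 0, ?_, ?_, ?_⟩
    · rintro u (rfl | hu) v (rfl | hv)
      · intro _; simp
      · simp only [Set.mem_singleton_iff] at hv; subst hv
        intro _; simp [hyz.symm, dist_nonneg]
      · simp only [Set.mem_singleton_iff] at hu; subst hu
        intro h'; exact absurd h' hzy
      · simp only [Set.mem_singleton_iff] at hu hv; subst hu; subst hv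
        intro _; simp
    · rintro u (rfl | hu) v (rfl | hv)
      · simp
      · simp only [Set.mem_singleton_iff] at hv; subst hv
        simp [hyz.symm, abs_of_nonneg dist_nonneg]
      · simp only [Set.mem_singleton_iff] at hu; subst hu
        simp [hyz.symm, abs_of_nonneg dist_nonneg, dist_comm]
      · simp only [Set.mem_singleton_iff] at hu hv; subst hu; subst hv; simp
    · intro F hF hext hmono
      have hFy : F y = dist y z := by
        have := hext y (by simp); simpa using this
      have hFz : F z = 0 := by
        have := hext z (by simp); simpa [hyz.symm] using this
      have h1 : F y ≤ F x := hmono x y hxy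
      have h2 : |F x - F z| ≤ dist x z := hF x z
      have := abs_le.mp h2
      have hx' : F x ≤ dist x z := by linarith [this.2]
      linarith
end

section
/- A linearly ordered metric space (X, d, ≽) (i.e., ≽ is a total order on X) has the monotone Lipschitz extension property if and only if it is radially convex. -/
/-- **Corollary 3.** A linearly ordered metric space has the monotone Lipschitz
extension property if and only if it is radially convex. Here `r x y` means
`x ≽ y` and `r` is a total (linear) order. -/
theorem monotoneLipschitzExtensionProperty_iff_radiallyConvex_of_total
    {X : Type*} [MetricSpace X] (r : X → X → Prop)
    (hrefl : ∀ x, r x x)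
    (htrans : ∀ x y z, r x y → r y z → r x z)
    (hantisymm : ∀ x y, r x y → r y x → x = y)
    (htotal : ∀ x y, r x y ∨ r y x) :
    (∀ S : Set X, S.Nonempty → ∀ K : ℝ, 0 < K → ∀ f : X → ℝ,
      (∀ x ∈ S, ∀ y ∈ S, r x y → f y ≤ f x) →
      (∀ x ∈ S, ∀ y ∈ S, |f x - f y| ≤ K * dist x y) →
      ∃ F : X → ℝ, (∀ x y, r x y → F y ≤ F x) ∧
        (∀ x y, |F x - F y| ≤ K * dist x y) ∧ ∀ x ∈ S, F x = f x) ↔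
    (∀ x y z, r x y ∧ x ≠ y → r y z ∧ y ≠ z →
      max (dist x y) (dist y z) ≤ dist x z) := by
  classical
  constructor
  · -- extension property → radial convexity
    intro hext x y z hxy hyz
    -- first bound : dist x y ≤ dist x z
    have h1 : dist x y ≤ dist x z := by
      set f : X → ℝ := fun w => if w = x then dist x y else 0 with hf
      have hfx : f x = dist x y := by simp [hf]
      have hfy : f y = 0 := by simp [hf, (Ne.symm hxy.2)]
      obtain ⟨F, hFmono, hFlip, hFeq⟩ :=
        hext {x, y} ⟨x, by simp⟩ 1 one_pos f
          (by
            intro a ha b hb hab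
            rcases ha with ha | ha <;> rcases hb with hb | hb <;> subst ha <;> subst hb
            · exact le_refl _
            · rw [hfx, hfy]; exact dist_nonneg
            · exact absurd (hantisymm _ _ hab hxy.1) (Ne.symm hxy.2)
            · exact le_refl _)
          (by
            intro a ha b hb
            rcases ha with ha | ha <;> rcases hb with hb | hb <;> subst ha <;> subst hb <;>
              simp [hfx, hfy, dist_comm, abs_of_nonneg dist_nonneg, dist_nonneg])
      have hFx : F x = dist x y := by rw [hFeq x (by simp), hfx]
      have hFy : F y = 0 := by rw [hFeq y (by simp), hfy]
      have hzy : F z ≤ F y := hFmono y z hyz.1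
      have := (abs_le.mp (hFlip x z)).2
      rw [hFx] at this
      rw [hFy] at hzy
      linarith
    -- second bound : dist y z ≤ dist x z
    have h2 : dist y z ≤ dist x z := by
      set f : X → ℝ := fun w => if w = y then dist y z else 0 with hf
      have hfy : f y = dist y z := by simp [hf]
      have hfz : f z = 0 := by simp [hf, (Ne.symm hyz.2)]
      obtain ⟨F, hFmono, hFlip, hFeq⟩ :=
        hext {y, z} ⟨y, by simp⟩ 1 one_pos f
          (by
            intro a ha b hb hab
            rcases ha with ha | ha <;> rcases hb with hb | hb <;> subst ha <;> subst hb
            · exact le_refl _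
            · rw [hfy, hfz]; exact dist_nonneg
            · exact absurd (hantisymm _ _ hab hyz.1) (Ne.symm hyz.2)
            · exact le_refl _)
          (by
            intro a ha b hb
            rcases ha with ha | ha <;> rcases hb with hb | hb <;> subst ha <;> subst hb <;>
              simp [hfy, hfz, dist_comm, abs_of_nonneg dist_nonneg, dist_nonneg])
      have hFy : F y = dist y z := by rw [hFeq y (by simp), hfy]
      have hFz : F z = 0 := by rw [hFeq z (by simp), hfz]
      have hxyF : F y ≤ F x := hFmono x y hxy.1
      have := (abs_le.mp (hFlip x z)).2
      rw [hFz] at this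
      rw [hFy] at hxyF
      linarith
    exact max_le h1 h2
  · -- radial convexity → extension property
    intro hrc S hS K hK f hmono hlip
    obtain ⟨t₀, ht₀⟩ := hS
    have hKnn : (0:ℝ) ≤ K := le_of_lt hK
    set g : X → X → ℝ := fun s x => if r x s then f s + K * dist x s else f s with hg
    -- g s is r-increasing
    have gmono : ∀ s x y, r x y → g s y ≤ g s x := by
      intro s x y hxy
      by_cases hys : r y s
      · have hxs : r x s := htrans _ _ _ hxy hys
        simp only [hg, if_pos hys, if_pos hxs]
        have hd : dist y s ≤ dist x s := by
          by_cases h1 : x = y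
          · subst h1; exact le_refl _
          by_cases h2 : y = s
          · subst h2; simpa using dist_nonneg
          · exact le_trans (le_max_right _ _) (hrc x y s ⟨hxy, h1⟩ ⟨hys, h2⟩)
        nlinarith
      · simp only [hg, if_neg hys]
        by_cases hxs : r x s
        · simp only [if_pos hxs]
          have : (0:ℝ) ≤ K * dist x s := mul_nonneg hKnn dist_nonneg
          linarith
        · simp only [if_neg hxs]; exact le_refl _
    -- g s is K-Lipschitz
    have glip : ∀ s x y, |g s x - g s y| ≤ K * dist x y := by
      intro s x y
      by_cases hxs : r x s <;> by_cases hys : r y s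
      · simp only [hg, if_pos hxs, if_pos hys]
        have h := abs_dist_sub_le x y s
        rw [show f s + K * dist x s - (f s + K * dist y s)
              = K * (dist x s - dist y s) by ring, abs_mul, abs_of_nonneg hKnn]
        exact mul_le_mul_of_nonneg_left h hKnn
      · have hsy : r s y := (htotal y s).resolve_left hys
        have hsny : s ≠ y := fun h => hys (h ▸ hrefl s)
        simp only [hg, if_pos hxs, if_neg hys]
        have hd : dist x s ≤ dist x y := by
          by_cases h1 : x = s
          · subst h1; simpa using dist_nonneg
          · exact le_trans (le_max_left _ _) (hrc x s y ⟨hxs, h1⟩ ⟨hsy, hsny⟩)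
        rw [show f s + K * dist x s - f s = K * dist x s by ring,
            abs_of_nonneg (mul_nonneg hKnn dist_nonneg)]
        exact mul_le_mul_of_nonneg_left hd hKnn
      · have hsx : r s x := (htotal x s).resolve_left hxs
        have hsnx : s ≠ x := fun h => hxs (h ▸ hrefl s)
        simp only [hg, if_neg hxs, if_pos hys]
        have hd : dist y s ≤ dist y x := by
          by_cases h1 : y = s
          · subst h1; simpa using dist_nonneg
          · exact le_trans (le_max_left _ _) (hrc y s x ⟨hys, h1⟩ ⟨hsx, hsnx⟩)
        rw [show f s - (f s + K * dist y s) = -(K * dist y s) by ring, abs_neg,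
            abs_of_nonneg (mul_nonneg hKnn dist_nonneg), dist_comm x y]
        exact mul_le_mul_of_nonneg_left hd hKnn
      · simp only [hg, if_neg hxs, if_neg hys, sub_self, abs_zero]
        exact mul_nonneg hKnn dist_nonneg
    -- g dominates f on S
    have gge : ∀ s ∈ S, ∀ t ∈ S, f t ≤ g s t := by
      intro s hs t ht
      by_cases hts : r t s
      · simp only [hg, if_pos hts]
        have h2 := (abs_le.mp (hlip t ht s hs)).2
        linarith
      · have hst : r s t := (htotal t s).resolve_left hts
        simp only [hg, if_neg hts]
        exact hmono s hs t ht hst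
    set F : X → ℝ := fun x => sInf ((fun s => g s x) '' S) with hF
    have hne : ∀ x : X, ((fun s => g s x) '' S).Nonempty :=
      fun x => ⟨g t₀ x, ⟨t₀, ht₀, rfl⟩⟩
    have hbdd : ∀ x : X, BddBelow ((fun s => g s x) '' S) := by
      intro x
      refine ⟨f t₀ - K * dist x t₀, ?_⟩
      rintro _ ⟨s, hs, rfl⟩
      have h1 := gge s hs t₀ ht₀
      have h2 := (abs_le.mp (glip s x t₀)).1
      simp only
      linarith
    have hFle : ∀ x : X, ∀ s ∈ S, F x ≤ g s x := by
      intro x s hs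
      exact csInf_le (hbdd x) ⟨s, hs, rfl⟩
    have hFge : ∀ (x : X) (c : ℝ), (∀ s ∈ S, c ≤ g s x) → c ≤ F x := by
      intro x c hc
      refine le_csInf (hne x) ?_
      rintro _ ⟨s, hs, rfl⟩
      exact hc s hs
    refine ⟨F, ?_, ?_, ?_⟩
    · intro x y hxy
      refine hFge x (F y) ?_
      intro s hs
      exact le_trans (hFle y s hs) (gmono s x y hxy)
    · intro x y
      rw [abs_sub_le_iff]
      constructor
      · have : F x - K * dist x y ≤ F y := by
          refine hFge y _ ?_
          intro s hs
          have h1 := hFle x s hs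
          have h2 := (abs_le.mp (glip s x y)).2
          linarith
        linarith
      · have : F y - K * dist x y ≤ F x := by
          refine hFge x _ ?_
          intro s hs
          have h1 := hFle y s hs
          have h2 := (abs_le.mp (glip s x y)).1
          linarith
        linarith
    · intro t ht
      have hgtt : g t t = f t := by
        simp [hg, if_pos (hrefl t)]
      refine le_antisymm ?_ (hFge t (f t) (fun s hs => gge s hs t ht))
      calc F t ≤ g t t := hFle t t ht
        _ = f t := hgtt
end

section
/- Let (X, d, ≽) be a radial partially ordered metric space, T a nonempty set, K ≥ 0, S a nonempty subset of X, and f : S → ℓ∞(T) an order-preserving K-Lipschitz map (where ℓ∞(T) is the Banach space of bounded real-valued functions on T with the supremum norm, partially ordered pointwise). Then there exists an order-preserving K-Lipschitz map F : X → ℓ∞(T) with F restricted to S equal to f. -/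
/-- **Theorem 4.** Order-preserving `K`-Lipschitz maps into `ℓ∞(T)` defined on a
nonempty subset of a radial partially ordered metric space extend to the whole
space. Elements of `ℓ∞(T)` are represented as bounded functions `T → ℝ`,
ordered pointwise; `K`-Lipschitz with respect to the sup norm is expressed
pointwise (`∀ t, |f x t - f y t| ≤ K * dist x y`, which is equivalent to
`‖f x - f y‖∞ ≤ K * dist x y`). Here `r x y` means `x ≽ y`. -/
theorem exists_monotone_lipschitz_extension_linfty {X : Type*} {T : Type*}
    [MetricSpace X] [Nonempty T] (r : X → X → Prop)
    (hrefl : ∀ x, r x x)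
    (htrans : ∀ x y z, r x y → r y z → r x z)
    (hantisymm : ∀ x y, r x y → r y x → x = y)
    (hrad1 : ∀ x y z, ¬ r y x → r y z ∧ y ≠ z → dist x y ≤ dist x z)
    (hrad2 : ∀ x y z, r x y ∧ x ≠ y → ¬ r z y → dist y z ≤ dist x z)
    (K : ℝ) (hK : 0 ≤ K) (S : Set X) (hS : S.Nonempty)
    (f : X → T → ℝ)
    (hbdd : ∀ x ∈ S, ∃ C : ℝ, ∀ t, |f x t| ≤ C)
    (hmono : ∀ x ∈ S, ∀ y ∈ S, r x y → ∀ t, f y t ≤ f x t)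
    (hlip : ∀ x ∈ S, ∀ y ∈ S, ∀ t, |f x t - f y t| ≤ K * dist x y) :
    ∃ F : X → T → ℝ,
      (∀ x, ∃ C : ℝ, ∀ t, |F x t| ≤ C) ∧
      (∀ x y, r x y → ∀ t, F y t ≤ F x t) ∧
      (∀ x y, ∀ t, |F x t - F y t| ≤ K * dist x y) ∧
      ∀ x ∈ S, F x = f x := by
  classical
  obtain ⟨s₀, hs₀⟩ := hS
  haveI : Nonempty S := ⟨⟨s₀, hs₀⟩⟩
  set ρ : X → X → ℝ := fun x s => if r s x then 0 else dist x s with hρ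
  have hρ_nonneg : ∀ x s, 0 ≤ ρ x s := by
    intro x s
    simp only [hρ]
    split
    · exact le_rfl
    · exact dist_nonneg
  have hρ_le : ∀ x s, ρ x s ≤ dist x s := by
    intro x s
    simp only [hρ]
    split
    · exact dist_nonneg
    · exact le_rfl
  set F : X → T → ℝ := fun x t => ⨅ s : S, (f s t + K * ρ x s) with hF
  -- lower bound on all the terms
  have hlb : ∀ (x : X) (t : T) (s : X), s ∈ S →
      f s₀ t - K * dist x s₀ ≤ f s t + K * ρ x s := by
    intro x t s hs
    by_cases h1 : r s s₀
    · have h2 := hmono s hs s₀ hs₀ h1 t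
      have h3 : 0 ≤ K * ρ x s := mul_nonneg hK (hρ_nonneg x s)
      have h4 : 0 ≤ K * dist x s₀ := mul_nonneg hK dist_nonneg
      linarith
    · have hf := (abs_le.mp (hlip s hs s₀ hs₀ t)).1
      by_cases h2 : r s x
      · have hρ0 : ρ x s = 0 := by simp [hρ, h2]
        have hd : dist s s₀ ≤ dist x s₀ := by
          rcases eq_or_ne s x with rfl | hne
          · exact le_rfl
          · have := hrad1 s₀ s x h1 ⟨h2, hne⟩
            rw [dist_comm s s₀, dist_comm x s₀]
            exact this
        have hK' : K * dist s s₀ ≤ K * dist x s₀ := mul_le_mul_of_nonneg_left hd hK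
        rw [hρ0]
        linarith
      · have hρd : ρ x s = dist x s := by simp [hρ, h2]
        have htri : dist s s₀ ≤ dist s x + dist x s₀ := dist_triangle _ _ _
        have hK' : K * dist s s₀ ≤ K * (dist s x + dist x s₀) :=
          mul_le_mul_of_nonneg_left htri hK
        rw [hρd, dist_comm x s]
        linarith [mul_add K (dist s x) (dist x s₀)]
  have hbdd' : ∀ (x : X) (t : T), BddBelow (Set.range fun s : S => f s t + K * ρ x s) := by
    intro x t
    exact ⟨f s₀ t - K * dist x s₀, by rintro _ ⟨s, rfl⟩; exact hlb x t s s.2⟩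
  have hle : ∀ (x : X) (t : T) (s : X) (hs : s ∈ S), F x t ≤ f s t + K * ρ x s := by
    intro x t s hs
    exact ciInf_le (hbdd' x t) ⟨s, hs⟩
  have hge : ∀ (x : X) (t : T), f s₀ t - K * dist x s₀ ≤ F x t := by
    intro x t
    exact le_ciInf fun s => hlb x t s s.2
  -- monotonicity of ρ
  have hρ_mono : ∀ x y, r x y → ∀ s, ρ y s ≤ ρ x s := by
    intro x y hxy s
    by_cases h2 : r s x
    · have h3 : r s y := htrans s x y h2 hxy
      simp [hρ, h2, h3]
    · rcases eq_or_ne x y with rfl | hne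
      · exact le_rfl
      by_cases h3 : r s y
      · simp [hρ, h2, h3]
      · simp [hρ, h2, h3]
        exact hrad2 x y s ⟨hxy, hne⟩ h3
  -- Lipschitz property of ρ
  have hρ_lip : ∀ x y s, ρ x s ≤ ρ y s + dist x y := by
    intro x y s
    by_cases h2 : r s x
    · simp only [hρ, if_pos h2]
      positivity
    · simp only [hρ, if_neg h2]
      by_cases h3 : r s y
      · rcases eq_or_ne s y with rfl | hne
        · simp [hrefl s]
        · have := hrad1 x s y h2 ⟨h3, hne⟩
          have := hρ_nonneg y s
          simp only [hρ] at this
          linarith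
      · simp only [if_neg h3]
        have := dist_triangle x y s
        linarith [this]
  -- key Lipschitz half-inequality for F
  have hFlip : ∀ x y t, F x t ≤ F y t + K * dist x y := by
    intro x y t
    have : F x t - K * dist x y ≤ F y t := by
      apply le_ciInf
      intro s
      have h1 := hle x t s s.2
      have h2 : ρ x s ≤ ρ y s + dist x y := hρ_lip x y s
      have h3 : K * ρ x s ≤ K * (ρ y s + dist x y) := mul_le_mul_of_nonneg_left h2 hK
      have h4 := mul_add K (ρ y s) (dist x y)
      linarith
    linarith
  refine ⟨F, ?_, ?_, ?_, ?_⟩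
  · -- boundedness
    intro x
    obtain ⟨C, hC⟩ := hbdd s₀ hs₀
    refine ⟨C + K * dist x s₀, fun t => ?_⟩
    have h1 := hle x t s₀ hs₀
    have h2 := hge x t
    have h3 := abs_le.mp (hC t)
    have h4 : K * ρ x s₀ ≤ K * dist x s₀ := mul_le_mul_of_nonneg_left (hρ_le x s₀) hK
    rw [abs_le]
    constructor <;> linarith
  · -- monotonicity
    intro x y hxy t
    apply le_ciInf
    intro s
    have h1 := hle y t s s.2
    have h2 : K * ρ y s ≤ K * ρ x s := mul_le_mul_of_nonneg_left (hρ_mono x y hxy s) hK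
    linarith
  · -- Lipschitz
    intro x y t
    rw [abs_le]
    have h1 := hFlip x y t
    have h2 := hFlip y x t
    rw [dist_comm y x] at h2
    constructor <;> linarith
  · -- agreement on S
    intro x hx
    funext t
    have h1 : F x t ≤ f x t := by
      have := hle x t x hx
      have hρ0 : ρ x x = 0 := by simp [hρ, hrefl x]
      rw [hρ0] at this
      linarith
    have h2 : f x t ≤ F x t := by
      apply le_ciInf
      intro s
      by_cases h : r s x
      · have := hmono s s.2 x hx h t
        have h3 : 0 ≤ K * ρ x s := mul_nonneg hK (hρ_nonneg x s)
        linarith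
      · have hρd : ρ x (s : X) = dist x s := by simp [hρ, h]
        have := (abs_le.mp (hlip x hx s s.2 t)).2
        rw [hρd, dist_comm x s]
        rw [dist_comm x s] at this
        linarith
    linarith
end

section
/- Let (X, d, ≽) be a radial partially ordered metric space, S a nonempty subset of X, f : S → ℝ a ≽-increasing 1-Lipschitz function, and x ∈ X \ S. Then sup{ f(z) − d(x,z) : z ∈ S } ≤ inf{ f(y) : y ∈ S, y ≽ x } and sup{ f(z) : z ∈ S, x ≽ z } ≤ inf{ f(y) + d(x,y) : y ∈ S } (with the conventions sup ∅ = −∞ and inf ∅ = +∞). -/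
/-- The key inequalities in the proof of Theorem 4 (scalar case): for a radial
partially ordered metric space, a nonempty `S ⊆ X`, an `≽`-increasing
`1`-Lipschitz `f : S → ℝ` and `x ∈ X \ S`, the McShane extension value at `x`
is below `inf {f y : y ∈ S, y ≽ x}` and `sup {f z : z ∈ S, x ≽ z}` is below the
Whitney extension value at `x`. Suprema and infima are taken in the extended
reals `EReal`, so that `sup ∅ = ⊥ = -∞` and `inf ∅ = ⊤ = +∞`.
Here `r x y` means `x ≽ y`. -/
theorem mcshane_whitney_order_bounds {X : Type*} [MetricSpace X]
    (r : X → X → Prop)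
    (hrefl : ∀ x, r x x)
    (htrans : ∀ x y z, r x y → r y z → r x z)
    (hantisymm : ∀ x y, r x y → r y x → x = y)
    (hrad1 : ∀ x y z, ¬ r y x → r y z ∧ y ≠ z → dist x y ≤ dist x z)
    (hrad2 : ∀ x y z, r x y ∧ x ≠ y → ¬ r z y → dist y z ≤ dist x z)
    (S : Set X) (hS : S.Nonempty) (f : X → ℝ)
    (hmono : ∀ x ∈ S, ∀ y ∈ S, r x y → f y ≤ f x)
    (hlip : ∀ x ∈ S, ∀ y ∈ S, |f x - f y| ≤ dist x y)
    (x : X) (hx : x ∉ S) :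
    sSup ((fun z => ((f z - dist x z : ℝ) : EReal)) '' S) ≤
      sInf ((fun y => ((f y : ℝ) : EReal)) '' {y ∈ S | r y x}) ∧
    sSup ((fun z => ((f z : ℝ) : EReal)) '' {z ∈ S | r x z}) ≤
      sInf ((fun y => ((f y + dist x y : ℝ) : EReal)) '' S) := by
  constructor
  · apply sSup_le
    rintro _ ⟨z, hz, rfl⟩
    apply le_sInf
    rintro _ ⟨y, ⟨hyS, hyx⟩, rfl⟩
    have key : f z - dist x z ≤ f y := by
      by_cases h : r y z
      · have := hmono y hyS z hz h
        have := dist_nonneg (x := x) (y := z)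
        linarith
      · have hne : y ≠ x := fun e => hx (e ▸ hyS)
        have hd := hrad1 z y x h ⟨hyx, hne⟩
        rw [dist_comm z x] at hd
        have hl := abs_le.mp (hlip z hz y hyS)
        linarith [hd, hl.2]
    exact EReal.coe_le_coe_iff.mpr key
  · apply sSup_le
    rintro _ ⟨z, ⟨hzS, hxz⟩, rfl⟩
    apply le_sInf
    rintro _ ⟨y, hyS, rfl⟩
    have key : f z ≤ f y + dist x y := by
      by_cases h : r y z
      · have := hmono y hyS z hzS h
        have := dist_nonneg (x := x) (y := y)
        linarith
      · have hne : x ≠ z := fun e => hx (e ▸ hzS)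
        have hd := hrad2 x z y ⟨hxz, hne⟩ h
        have hl := abs_le.mp (hlip z hzS y hyS)
        linarith [hd, hl.2]
    exact EReal.coe_le_coe_iff.mpr key
end

section
/- Let (X, d, ≽) be a radial partially ordered metric space, K > 0, S a nonempty subset of X, and f : S → ℝ a ≽-increasing K-Lipschitz function. Then among all ≽-increasing K-Lipschitz functions F : X → ℝ extending f there is a smallest one, i.e., there exists such an extension F₀ with F₀ ≤ F pointwise for every ≽-increasing K-Lipschitz extension F of f; likewise there is a largest such extension. -/
/-- Auxiliary: existence of a smallest increasing `K`-Lipschitz extension. -/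
theorem aux_smallest_monotone_lipschitz_extension
    {X : Type*} [MetricSpace X] (r : X → X → Prop)
    (hrefl : ∀ x, r x x)
    (htrans : ∀ x y z, r x y → r y z → r x z)
    (hrad1 : ∀ x y z, ¬ r y x → r y z ∧ y ≠ z → dist x y ≤ dist x z)
    (hrad2 : ∀ x y z, r x y ∧ x ≠ y → ¬ r z y → dist y z ≤ dist x z)
    (K : ℝ) (hK : 0 < K) (S : Set X) (hS : S.Nonempty) (f : X → ℝ)
    (hmono : ∀ x ∈ S, ∀ y ∈ S, r x y → f y ≤ f x)
    (hlip : ∀ x ∈ S, ∀ y ∈ S, |f x - f y| ≤ K * dist x y) :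
    ∃ F₀ : X → ℝ,
      ((∀ x y, r x y → F₀ y ≤ F₀ x) ∧ (∀ x y, |F₀ x - F₀ y| ≤ K * dist x y) ∧
        ∀ x ∈ S, F₀ x = f x) ∧
      ∀ F : X → ℝ, (∀ x y, r x y → F y ≤ F x) →
        (∀ x y, |F x - F y| ≤ K * dist x y) → (∀ x ∈ S, F x = f x) →
        ∀ x, F₀ x ≤ F x := by
  obtain ⟨s₀, hs₀⟩ := hS
  set A : X → Set ℝ := fun x => {v | ∃ s ∈ S, ∃ z, r x z ∧ v = f s - K * dist z s}
    with hA
  have hAne : ∀ x, (A x).Nonempty := fun x =>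
    ⟨f s₀ - K * dist x s₀, s₀, hs₀, x, hrefl x, rfl⟩
  -- Key upper bound on elements of A x
  have keyUB : ∀ x, ∀ t ∈ S, ∀ v ∈ A x, v ≤ f t + K * dist x t := by
    rintro x t ht v ⟨s, hs, z, hxz, rfl⟩
    have hdzs : 0 ≤ K * dist z s := mul_nonneg hK.le dist_nonneg
    have hdxt : 0 ≤ K * dist x t := mul_nonneg hK.le dist_nonneg
    by_cases hts : r t s
    · have h1 : f s ≤ f t := hmono t ht s hs hts
      linarith
    · have hst : f s - f t ≤ K * dist s t := by
        have := hlip s hs t ht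
        have := abs_le.mp this
        linarith [this.2]
      by_cases hxs : r x s
      · have h1 : dist s t ≤ dist x t := by
          rcases eq_or_ne x s with rfl | hne
          · exact le_of_eq rfl
          · exact hrad2 x s t ⟨hxs, hne⟩ hts
        have := mul_le_mul_of_nonneg_left h1 hK.le
        linarith
      · have h1 : dist s x ≤ dist s z := by
          rcases eq_or_ne x z with rfl | hne
          · exact le_of_eq rfl
          · exact hrad1 s x z hxs ⟨hxz, hne⟩
        have h2 : dist s t ≤ dist s x + dist x t := dist_triangle s x t
        have h3 : K * dist s t ≤ K * (dist s x + dist x t) :=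
          mul_le_mul_of_nonneg_left h2 hK.le
        have h4 : K * dist s x ≤ K * dist s z := mul_le_mul_of_nonneg_left h1 hK.le
        have h5 : dist z s = dist s z := dist_comm z s
        nlinarith
  have hbdd : ∀ x, BddAbove (A x) := fun x =>
    ⟨f s₀ + K * dist x s₀, fun v hv => keyUB x s₀ hs₀ v hv⟩
  refine ⟨fun x => sSup (A x), ⟨?_, ?_, ?_⟩, ?_⟩
  · -- monotone
    intro x y hxy
    refine csSup_le_csSup (hbdd x) (hAne y) ?_
    rintro v ⟨s, hs, z, hyz, rfl⟩
    exact ⟨s, hs, z, htrans x y z hxy hyz, rfl⟩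
  · -- Lipschitz
    have oneSide : ∀ x y, sSup (A x) ≤ sSup (A y) + K * dist x y := by
      intro x y
      refine csSup_le (hAne x) ?_
      rintro v ⟨s, hs, z, hxz, rfl⟩
      have hdzs : 0 ≤ K * dist z s := mul_nonneg hK.le dist_nonneg
      have hdxy : 0 ≤ K * dist x y := mul_nonneg hK.le dist_nonneg
      by_cases hys : r y s
      · have hmem : f s - K * dist s s ∈ A y := ⟨s, hs, s, hys, rfl⟩
        have h1 : f s - K * dist s s ≤ sSup (A y) := le_csSup (hbdd y) hmem
        simp only [dist_self, mul_zero, sub_zero] at h1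
        linarith
      · have hmemy : f s - K * dist y s ∈ A y := ⟨s, hs, y, hrefl y, rfl⟩
        have h1 : f s - K * dist y s ≤ sSup (A y) := le_csSup (hbdd y) hmemy
        by_cases hxs : r x s
        · have h2 : dist s y ≤ dist x y := by
            rcases eq_or_ne x s with rfl | hne
            · exact le_of_eq (by rw [dist_comm])
            · exact hrad2 x s y ⟨hxs, hne⟩ hys
          have h3 : K * dist s y ≤ K * dist x y := mul_le_mul_of_nonneg_left h2 hK.le
          rw [dist_comm y s] at h1
          linarith
        · have h2 : dist s x ≤ dist s z := by
            rcases eq_or_ne x z with rfl | hne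
            · exact le_of_eq rfl
            · exact hrad1 s x z hxs ⟨hxz, hne⟩
          have h3 : dist y s ≤ dist y x + dist x s := dist_triangle y x s
          have h4 : K * dist y s ≤ K * (dist y x + dist x s) :=
            mul_le_mul_of_nonneg_left h3 hK.le
          have h5 : K * dist s x ≤ K * dist s z := mul_le_mul_of_nonneg_left h2 hK.le
          have h6 : dist z s = dist s z := dist_comm z s
          have h7 : dist x s = dist s x := dist_comm x s
          have h8 : dist y x = dist x y := dist_comm y x
          nlinarith
    intro x y
    rw [abs_sub_le_iff]
    constructor
    · have := oneSide x y; linarith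
    · have := oneSide y x; rw [dist_comm y x] at this; linarith
  · -- extends f
    intro x hx
    refine le_antisymm ?_ ?_
    · refine csSup_le (hAne x) fun v hv => ?_
      have := keyUB x x hx v hv
      simpa using this
    · have hmem : f x - K * dist x x ∈ A x := ⟨x, hx, x, hrefl x, rfl⟩
      have := le_csSup (hbdd x) hmem
      simpa using this
  · -- minimality
    intro F Fmono Flip Fext x
    refine csSup_le (hAne x) ?_
    rintro v ⟨s, hs, z, hxz, rfl⟩
    have h1 : F z ≤ F x := Fmono x z hxz
    have h2 : |F z - F s| ≤ K * dist z s := Flip z s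
    have h3 : F s = f s := Fext s hs
    have := abs_le.mp h2
    linarith [this.1]

/-- **Remark 3.** In a radial partially ordered metric space, among all
`≽`-increasing `K`-Lipschitz extensions of an `≽`-increasing `K`-Lipschitz
`f : S → ℝ` there exist a (pointwise) smallest one and a largest one.
Here `r x y` means `x ≽ y`. -/
theorem exists_smallest_and_largest_monotone_lipschitz_extension
    {X : Type*} [MetricSpace X] (r : X → X → Prop)
    (hrefl : ∀ x, r x x)
    (htrans : ∀ x y z, r x y → r y z → r x z)
    (hantisymm : ∀ x y, r x y → r y x → x = y)
    (hrad1 : ∀ x y z, ¬ r y x → r y z ∧ y ≠ z → dist x y ≤ dist x z)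
    (hrad2 : ∀ x y z, r x y ∧ x ≠ y → ¬ r z y → dist y z ≤ dist x z)
    (K : ℝ) (hK : 0 < K) (S : Set X) (hS : S.Nonempty) (f : X → ℝ)
    (hmono : ∀ x ∈ S, ∀ y ∈ S, r x y → f y ≤ f x)
    (hlip : ∀ x ∈ S, ∀ y ∈ S, |f x - f y| ≤ K * dist x y) :
    (∃ F₀ : X → ℝ,
      ((∀ x y, r x y → F₀ y ≤ F₀ x) ∧ (∀ x y, |F₀ x - F₀ y| ≤ K * dist x y) ∧
        ∀ x ∈ S, F₀ x = f x) ∧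
      ∀ F : X → ℝ, (∀ x y, r x y → F y ≤ F x) →
        (∀ x y, |F x - F y| ≤ K * dist x y) → (∀ x ∈ S, F x = f x) →
        ∀ x, F₀ x ≤ F x) ∧
    (∃ F₁ : X → ℝ,
      ((∀ x y, r x y → F₁ y ≤ F₁ x) ∧ (∀ x y, |F₁ x - F₁ y| ≤ K * dist x y) ∧
        ∀ x ∈ S, F₁ x = f x) ∧
      ∀ F : X → ℝ, (∀ x y, r x y → F y ≤ F x) →
        (∀ x y, |F x - F y| ≤ K * dist x y) → (∀ x ∈ S, F x = f x) →
        ∀ x, F x ≤ F₁ x) := by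
  constructor
  · exact aux_smallest_monotone_lipschitz_extension r hrefl htrans hrad1 hrad2
      K hK S hS f hmono hlip
  · -- apply the aux lemma to the reversed order and -f
    set r' : X → X → Prop := fun a b => r b a with hr'
    have hrefl' : ∀ x, r' x x := hrefl
    have htrans' : ∀ x y z, r' x y → r' y z → r' x z := fun x y z h1 h2 =>
      htrans z y x h2 h1
    have hrad1' : ∀ x y z, ¬ r' y x → r' y z ∧ y ≠ z → dist x y ≤ dist x z := by
      intro x y z h1 h2
      have := hrad2 z y x ⟨h2.1, h2.2.symm⟩ h1
      rwa [dist_comm y x, dist_comm z x] at this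
    have hrad2' : ∀ x y z, r' x y ∧ x ≠ y → ¬ r' z y → dist y z ≤ dist x z := by
      intro x y z h1 h2
      have := hrad1 z y x h2 ⟨h1.1, h1.2.symm⟩
      rwa [dist_comm z y, dist_comm z x] at this
    have hmono' : ∀ x ∈ S, ∀ y ∈ S, r' x y → (-f) y ≤ (-f) x := by
      intro x hx y hy h
      simp only [Pi.neg_apply, neg_le_neg_iff]
      exact hmono y hy x hx h
    have hlip' : ∀ x ∈ S, ∀ y ∈ S, |(-f) x - (-f) y| ≤ K * dist x y := by
      intro x hx y hy
      simp only [Pi.neg_apply]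
      rw [show -f x - -f y = -(f x - f y) by ring, abs_neg]
      exact hlip x hx y hy
    obtain ⟨G, ⟨Gmono, Glip, Gext⟩, Gmin⟩ :=
      aux_smallest_monotone_lipschitz_extension r' hrefl' htrans' hrad1' hrad2'
        K hK S hS (-f) hmono' hlip'
    refine ⟨fun x => -(G x), ⟨?_, ?_, ?_⟩, ?_⟩
    · intro x y hxy
      have := Gmono y x hxy
      dsimp only
      linarith
    · intro x y
      rw [show -G x - -G y = -(G x - G y) by ring, abs_neg]
      exact Glip x y
    · intro x hx
      have := Gext x hx
      simp only [Pi.neg_apply] at this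
      dsimp only
      linarith
    · intro F Fmono Flip Fext x
      dsimp only
      have hG : G x ≤ -F x := by
        refine Gmin (fun z => -(F z)) (fun a b h => by have := Fmono b a h; linarith)
          (fun a b => by
            rw [show -F a - -F b = -(F a - F b) by ring, abs_neg]; exact Flip a b)
          (fun z hz => by simp [Fext z hz]) x
      linarith
end

section
/- Let (X, d, ≽) be a radial partially ordered metric space. Then there exists a family 𝓕 of ≽-increasing 1-Lipschitz functions from X to ℝ that represents ≽, i.e., for all x,y ∈ X, x ≽ y holds if and only if F(x) ≥ F(y) for every F ∈ 𝓕. -/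
/-- **Proposition 5** (first part). Every radial partial order on a metric
space is represented by a family of `≽`-increasing `1`-Lipschitz real-valued
functions. Here `r x y` means `x ≽ y`. -/
theorem exists_lipschitz_family_representing_radial_order
    {X : Type*} [MetricSpace X] (r : X → X → Prop)
    (hrefl : ∀ x, r x x)
    (htrans : ∀ x y z, r x y → r y z → r x z)
    (hantisymm : ∀ x y, r x y → r y x → x = y)
    (hrad1 : ∀ x y z, ¬ r y x → r y z ∧ y ≠ z → dist x y ≤ dist x z)
    (hrad2 : ∀ x y z, r x y ∧ x ≠ y → ¬ r z y → dist y z ≤ dist x z) :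
    ∃ 𝓕 : Set (X → ℝ),
      (∀ F ∈ 𝓕, ∀ x y, r x y → F y ≤ F x) ∧
      (∀ F ∈ 𝓕, ∀ x y, |F x - F y| ≤ dist x y) ∧
      ∀ x y, r x y ↔ ∀ F ∈ 𝓕, F y ≤ F x := by
  classical
  -- The family: for each point `p`, the distance from `p` to the upper set of `w`.
  set G : X → X → ℝ := fun p w => Metric.infDist p {z | r z w} with hG
  have hne : ∀ w : X, ({z | r z w} : Set X).Nonempty := fun w => ⟨w, hrefl w⟩
  -- monotonicity
  have hmono : ∀ p x y, r x y → G p y ≤ G p x := by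
    intro p x y hxy
    exact Metric.infDist_le_infDist_of_subset
      (fun z hz => htrans z x y hz hxy) (hne x)
  -- one-sided Lipschitz estimate
  have hlip1 : ∀ p a b, G p a ≤ G p b + dist a b := by
    intro p a b
    have : ∀ z ∈ {z | r z b}, G p a - dist a b ≤ dist p z := by
      intro z hz
      by_cases hza : r z a
      · have : Metric.infDist p {z | r z a} ≤ dist p z :=
          Metric.infDist_le_dist_of_mem hza
        have hGa : G p a = Metric.infDist p {z | r z a} := rfl
        have := dist_nonneg (x := a) (y := b)
        linarith
      · have hzb : dist a z ≤ dist a b := by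
          by_cases hzb' : z = b
          · subst hzb'; exact le_refl _
          · exact hrad1 a z b hza ⟨hz, hzb'⟩
        have h1 : G p a ≤ dist p a := Metric.infDist_le_dist_of_mem (hrefl a)
        have h2 : dist p a ≤ dist p z + dist z a := dist_triangle p z a
        have h3 : dist z a = dist a z := dist_comm z a
        linarith
    by_contra h
    push_neg at h
    have h' : Metric.infDist p {z | r z b} < G p a - dist a b := by linarith
    obtain ⟨z, hz, hz'⟩ := (Metric.infDist_lt_iff (hne b)).1 h'
    exact absurd (this z hz) (not_le.2 hz')
  refine ⟨Set.range G, ?_, ?_, ?_⟩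
  · rintro F ⟨p, rfl⟩ x y hxy
    exact hmono p x y hxy
  · rintro F ⟨p, rfl⟩ a b
    rw [abs_sub_le_iff]
    constructor
    · have := hlip1 p a b; linarith
    · have := hlip1 p b a; rw [dist_comm b a] at this; linarith
  · intro x y
    constructor
    · rintro hxy F ⟨p, rfl⟩
      exact hmono p x y hxy
    · intro h
      by_contra hxy
      have hx0 : G x x = 0 := Metric.infDist_zero_of_mem (hrefl x)
      have hxney : x ≠ y := fun h' => hxy (h' ▸ hrefl x)
      have hy : dist x y ≤ G x y := by
        by_contra hlt
        push_neg at hlt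
        obtain ⟨z, hz, hz'⟩ := (Metric.infDist_lt_iff (hne y)).1 hlt
        by_cases hzy : z = y
        · subst hzy; exact absurd hz' (lt_irrefl _)
        · have := hrad2 z y x ⟨hz, hzy⟩ hxy
          rw [dist_comm y x] at this
          rw [dist_comm x z] at hz'
          linarith
      have hle : G x y ≤ G x x := h (G x) ⟨x, rfl⟩
      have : dist x y ≤ 0 := by rw [hx0] at hle; linarith
      exact hxney (by
        have := dist_nonneg (x := x) (y := y)
        have hd : dist x y = 0 := le_antisymm ‹dist x y ≤ 0› this
        exact dist_eq_zero.mp hd)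
end

section
/- Let (X, d, ≽) be a radial partially ordered metric space with (X,d) compact. Then there exists a family 𝓕 of ≽-increasing 1-Lipschitz functions from X to ℝ that represents ≽, such that 𝓕 is compact as a subset of the space of bounded continuous real functions on X with the uniform (supremum) metric and sup_{F ∈ 𝓕} ‖F‖∞ ≤ diam(X). -/
open Metric

/-- **Proposition 5** (second part). On a compact metric space, a radial
partial order is represented by a compact family `𝓕` of `≽`-increasing
`1`-Lipschitz functions (a compact subset of the space `BoundedContinuousFunction X ℝ` of bounded
continuous functions with the sup metric) with `sup_{F ∈ 𝓕} ‖F‖∞ ≤ diam X`.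
Here `r x y` means `x ≽ y`. -/
theorem exists_compact_lipschitz_family_representing_radial_order
    {X : Type*} [MetricSpace X] [CompactSpace X] (r : X → X → Prop)
    (hrefl : ∀ x, r x x)
    (htrans : ∀ x y z, r x y → r y z → r x z)
    (hantisymm : ∀ x y, r x y → r y x → x = y)
    (hrad1 : ∀ x y z, ¬ r y x → r y z ∧ y ≠ z → dist x y ≤ dist x z)
    (hrad2 : ∀ x y z, r x y ∧ x ≠ y → ¬ r z y → dist y z ≤ dist x z) :
    ∃ 𝓕 : Set (BoundedContinuousFunction X ℝ),
      IsCompact 𝓕 ∧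
      (∀ F ∈ 𝓕, ∀ x y, r x y → F y ≤ F x) ∧
      (∀ F ∈ 𝓕, ∀ x y, |F x - F y| ≤ dist x y) ∧
      (∀ F ∈ 𝓕, ‖F‖ ≤ Metric.diam (Set.univ : Set X)) ∧
      ∀ x y, r x y ↔ ∀ F ∈ 𝓕, F y ≤ F x := by
  classical
  set L : X → Set X := fun z => {w | r z w} with hLdef
  have hmem : ∀ z, z ∈ L z := fun z => hrefl z
  have hne : ∀ z, (L z).Nonempty := fun z => ⟨z, hmem z⟩
  -- monotonicity: r x y → infDist y (L z) ≤ infDist x (L z)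
  have key_mono : ∀ z x y, r x y → infDist y (L z) ≤ infDist x (L z) := by
    intro z x y hxy
    by_cases hzy : r z y
    · rw [infDist_zero_of_mem (show y ∈ L z from hzy)]
      exact infDist_nonneg
    · by_cases hxeq : x = y
      · subst hxeq; exact le_refl _
      · have hpt : ∀ w ∈ L z, dist y w ≤ dist x w := by
          intro w hw
          have hwy : ¬ r w y := fun h => hzy (htrans z w y hw h)
          exact hrad2 x y w ⟨hxy, hxeq⟩ hwy
        rw [infDist_eq_iInf, infDist_eq_iInf]
        refine ciInf_mono ⟨0, ?_⟩ (fun w => hpt w w.2)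
        rintro b ⟨w, rfl⟩; exact dist_nonneg
  -- separation: ¬ r x y → dist y x ≤ infDist y (L x)
  have key_sep : ∀ x y, ¬ r x y → dist y x ≤ infDist y (L x) := by
    intro x y hxy
    by_contra h
    push_neg at h
    obtain ⟨w, hw, hwlt⟩ := (infDist_lt_iff (hne x)).1 h
    rcases eq_or_ne x w with rfl | hxw
    · exact absurd hwlt (lt_irrefl _)
    · exact absurd (lt_of_le_of_lt (hrad1 y x w hxy ⟨hw, hxw⟩) hwlt) (lt_irrefl _)
  -- 1-Lipschitz in z: infDist x (L z) ≤ infDist x (L z') + dist z z'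
  have key_z : ∀ z z' x, infDist x (L z) ≤ infDist x (L z') + dist z z' := by
    intro z z' x
    have h1 : ∀ w ∈ L z', infDist x (L z) ≤ dist x w + dist z z' := by
      intro w hw
      by_cases hzw : r z w
      · calc infDist x (L z) ≤ dist x w := infDist_le_dist_of_mem hzw
          _ ≤ dist x w + dist z z' := le_add_of_nonneg_right dist_nonneg
      · have hwz : dist w z ≤ dist z' z := by
          rcases eq_or_ne z' w with rfl | hne'
          · exact le_refl _
          · exact hrad2 z' w z ⟨hw, hne'⟩ hzw
        calc infDist x (L z) ≤ dist x z := infDist_le_dist_of_mem (hmem z)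
          _ ≤ dist x w + dist w z := dist_triangle x w z
          _ ≤ dist x w + dist z' z := by linarith
          _ = dist x w + dist z z' := by rw [dist_comm z' z]
    -- take inf over w
    by_contra h
    push_neg at h
    have : infDist x (L z') < infDist x (L z) - dist z z' := by linarith
    obtain ⟨w, hw, hwlt⟩ := (infDist_lt_iff (hne z')).1 this
    have := h1 w hw
    linarith
  -- define the family
  set Φ : X → BoundedContinuousFunction X ℝ := fun z =>
    BoundedContinuousFunction.mkOfCompact
      ⟨fun x => infDist x (L z), (lipschitz_infDist_pt (L z)).continuous⟩ with hΦdef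
  have hΦapp : ∀ z x, Φ z x = infDist x (L z) := fun z x => rfl
  have hΦcont : Continuous Φ := by
    have : LipschitzWith 1 Φ := by
      apply LipschitzWith.of_dist_le_mul
      intro z z'
      rw [NNReal.coe_one, one_mul]
      rw [BoundedContinuousFunction.dist_le dist_nonneg]
      intro x
      rw [Real.dist_eq, abs_sub_le_iff]
      constructor
      · have := key_z z z' x; simp only [hΦapp]; linarith
      · have := key_z z' z x; simp only [hΦapp]; rw [dist_comm z z']; linarith
    exact this.continuous
  refine ⟨Set.range Φ, ?_, ?_, ?_, ?_, ?_⟩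
  · exact isCompact_range hΦcont
  · rintro F ⟨z, rfl⟩ x y hxy
    exact key_mono z x y hxy
  · rintro F ⟨z, rfl⟩ x y
    have := (lipschitz_infDist_pt (L z)).dist_le_mul x y
    rw [NNReal.coe_one, one_mul, Real.dist_eq] at this
    exact this
  · rintro F ⟨z, rfl⟩
    rw [BoundedContinuousFunction.norm_le Metric.diam_nonneg]
    intro x
    simp only [hΦapp]
    rw [Real.norm_eq_abs, abs_of_nonneg infDist_nonneg]
    calc infDist x (L z) ≤ dist x z := infDist_le_dist_of_mem (hmem z)
      _ ≤ Metric.diam (Set.univ : Set X) :=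
        Metric.dist_le_diam_of_mem isCompact_univ.isBounded trivial trivial
  · intro x y
    constructor
    · rintro hxy F ⟨z, rfl⟩
      exact key_mono z x y hxy
    · intro h
      by_contra hxy
      have h1 := h (Φ x) ⟨x, rfl⟩
      rw [hΦapp, hΦapp, infDist_zero_of_mem (hmem x)] at h1
      have h2 := key_sep x y hxy
      have hxne : x ≠ y := fun e => hxy (e ▸ hrefl x)
      have : 0 < dist y x := dist_pos.2 (Ne.symm hxne)
      linarith
end

section
/- Every radial partial order ≽ on a metric space (X,d) is a closed subset of X × X (with the product topology), i.e., the set {(x,y) ∈ X × X : x ≽ y} is closed. -/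
open Filter Topology

/-- **Corollary 6.** Every radial partial order on a metric space is a closed
subset of `X × X`. Here `r x y` means `x ≽ y`. -/
theorem radial_partialOrder_isClosed {X : Type*} [MetricSpace X]
    (r : X → X → Prop)
    (hrefl : ∀ x, r x x)
    (htrans : ∀ x y z, r x y → r y z → r x z)
    (hantisymm : ∀ x y, r x y → r y x → x = y)
    (hrad1 : ∀ x y z, ¬ r y x → r y z ∧ y ≠ z → dist x y ≤ dist x z)
    (hrad2 : ∀ x y z, r x y ∧ x ≠ y → ¬ r z y → dist y z ≤ dist x z) :
    IsClosed {p : X × X | r p.1 p.2} := by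
  rw [← isSeqClosed_iff_isClosed]
  intro u p hu hlim
  obtain ⟨x, y⟩ := p
  simp only [Set.mem_setOf_eq] at hu ⊢
  by_contra hxy
  have hx : Tendsto (fun n => (u n).1) atTop (𝓝 x) :=
    (continuous_fst.tendsto _).comp hlim
  have hy : Tendsto (fun n => (u n).2) atTop (𝓝 y) :=
    (continuous_snd.tendsto _).comp hlim
  have hne : x = y → False := fun h => hxy (h ▸ hrefl x)
  by_cases hcase : ∀ᶠ n in atTop, r x (u n).2
  · -- eventually r x yₙ : use hrad1 to get dist y x ≤ dist y yₙ → 0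
    have h1 : ∀ᶠ n in atTop, dist y x ≤ dist y (u n).2 := by
      filter_upwards [hcase] with n hn
      by_cases he : x = (u n).2
      · rw [← he]
      · exact hrad1 y x (u n).2 hxy ⟨hn, he⟩
    have hd : Tendsto (fun n => dist y (u n).2) atTop (𝓝 (dist y y)) :=
      (continuous_dist.tendsto _).comp (tendsto_const_nhds.prodMk_nhds hy)
    have : dist y x ≤ dist y y := ge_of_tendsto hd h1
    rw [dist_self] at this
    exact hne (dist_le_zero.mp (dist_comm y x ▸ this)).symm
  · -- frequently ¬ r x yₙ : use hrad2 to get dist yₙ x ≤ dist xₙ x frequently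
    have hfreq : ∃ᶠ n in atTop, ¬ r x (u n).2 := by
      rwa [Filter.not_eventually] at hcase
    have h2 : ∃ᶠ n in atTop, dist x y ≤ dist (u n).1 x + dist (u n).2 y := by
      refine hfreq.mono fun n hn => ?_
      have key : dist (u n).2 x ≤ dist (u n).1 x := by
        by_cases he : (u n).1 = (u n).2
        · rw [he]
        · exact hrad2 (u n).1 (u n).2 x ⟨hu n, he⟩ hn
      calc dist x y ≤ dist x (u n).2 + dist (u n).2 y := dist_triangle _ _ _
        _ = dist (u n).2 x + dist (u n).2 y := by rw [dist_comm]
        _ ≤ dist (u n).1 x + dist (u n).2 y := by linarith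
    have hd : Tendsto (fun n => dist (u n).1 x + dist (u n).2 y) atTop (𝓝 0) := by
      have h1 := tendsto_iff_dist_tendsto_zero.mp hx
      have h2 := tendsto_iff_dist_tendsto_zero.mp hy
      simpa using h1.add h2
    have hle : dist x y ≤ 0 := by
      by_contra h0
      push_neg at h0
      have := (h2.and_eventually (hd.eventually (eventually_lt_nhds h0))).exists
      obtain ⟨n, h1', h2'⟩ := this
      linarith
    exact hne (dist_le_zero.mp hle)
end

section
/- Let (X, d, ≽) be a radial partially ordered metric space and S a nonempty compact subset of X. Then there exists a ≽-increasing 1-Lipschitz function G : X → ℝ with ‖G‖∞ ≤ diam(S) such that G(x) > G(y) for every x,y ∈ S with x ≻ y. -/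
set_option maxHeartbeats 1000000 in
/-- **Lemma 7.** Given a radial partially ordered metric space and a nonempty
compact `S ⊆ X`, there is an `≽`-increasing `1`-Lipschitz `G : X → ℝ` with
`‖G‖∞ ≤ diam S` which is strictly increasing on `S`. Here `r x y` means
`x ≽ y`. -/
theorem exists_strictly_increasing_on_compact {X : Type*} [MetricSpace X]
    (r : X → X → Prop)
    (hrefl : ∀ x, r x x)
    (htrans : ∀ x y z, r x y → r y z → r x z)
    (hantisymm : ∀ x y, r x y → r y x → x = y)
    (hrad1 : ∀ x y z, ¬ r y x → r y z ∧ y ≠ z → dist x y ≤ dist x z)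
    (hrad2 : ∀ x y z, r x y ∧ x ≠ y → ¬ r z y → dist y z ≤ dist x z)
    (S : Set X) (hS : S.Nonempty) (hScomp : IsCompact S) :
    ∃ G : X → ℝ,
      (∀ x y, r x y → G y ≤ G x) ∧
      (∀ x y, |G x - G y| ≤ dist x y) ∧
      (∀ x, |G x| ≤ Metric.diam S) ∧
      ∀ x ∈ S, ∀ y ∈ S, r x y ∧ x ≠ y → G y < G x := by
  classical
  have hle_infDist : ∀ (b : ℝ) (x : X) (s : Set X), s.Nonempty →
      (∀ w ∈ s, b ≤ dist x w) → b ≤ Metric.infDist x s := by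
    intro b x s hs h
    by_contra hlt
    push_neg at hlt
    obtain ⟨w, hw, hwlt⟩ := (Metric.infDist_lt_iff hs).1 hlt
    exact absurd (h w hw) (not_le.2 hwlt)
  set D := Metric.diam S with hD
  have hD0 : 0 ≤ D := Metric.diam_nonneg
  set L : X → Set X := fun z => {w | r z w} with hL
  have hzL : ∀ z, z ∈ L z := fun z => hrefl z
  set g : X → X → ℝ := fun z x => min (Metric.infDist x (L z)) D with hg
  have hg0 : ∀ z x, 0 ≤ g z x := fun z x => le_min Metric.infDist_nonneg hD0
  have hgD : ∀ z x, g z x ≤ D := fun z x => min_le_right _ _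
  -- monotonicity of infDist
  have hmono : ∀ z x y, r x y → Metric.infDist y (L z) ≤ Metric.infDist x (L z) := by
    intro z x y hxy
    apply hle_infDist _ _ _ ⟨z, hzL z⟩
    intro w hw
    by_cases hwy : r w y
    · have : y ∈ L z := htrans z w y hw hwy
      rw [Metric.infDist_zero_of_mem this]
      exact dist_nonneg
    · by_cases hxeq : x = y
      · subst hxeq
        exact Metric.infDist_le_dist_of_mem hw
      · calc Metric.infDist y (L z) ≤ dist y w := Metric.infDist_le_dist_of_mem hw
          _ ≤ dist x w := hrad2 x y w ⟨hxy, hxeq⟩ hwy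
  have hgmono : ∀ z x y, r x y → g z y ≤ g z x := by
    intro z x y hxy
    exact min_le_min (hmono z x y hxy) le_rfl
  -- lower bound on infDist when z is not below x
  have hlow : ∀ z x, ¬ r z x → dist x z ≤ Metric.infDist x (L z) := by
    intro z x hzx
    apply hle_infDist _ _ _ ⟨z, hzL z⟩
    intro w hw
    by_cases hzw : z = w
    · subst hzw; exact le_rfl
    · exact hrad1 x z w hzx ⟨hw, hzw⟩
  -- Lipschitz of g z
  have hglip : ∀ z x y, |g z x - g z y| ≤ dist x y := by
    intro z x y
    have h1 : Metric.infDist x (L z) ≤ Metric.infDist y (L z) + dist x y :=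
      Metric.infDist_le_infDist_add_dist
    have h2 : Metric.infDist y (L z) ≤ Metric.infDist x (L z) + dist y x :=
      Metric.infDist_le_infDist_add_dist
    rw [dist_comm y x] at h2
    have habs : |Metric.infDist x (L z) - Metric.infDist y (L z)| ≤ dist x y := by
      rw [abs_sub_le_iff]
      constructor <;> linarith
    calc |g z x - g z y| ≤ max |Metric.infDist x (L z) - Metric.infDist y (L z)| |D - D| :=
          abs_min_sub_min_le_max _ _ _ _
      _ ≤ dist x y := by
          rw [sub_self, abs_zero]
          exact max_le habs dist_nonneg
  -- countable dense subset
  obtain ⟨c, hccount, hclos⟩ := hScomp.isSeparable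
  have hcne : c.Nonempty := by
    rcases hS with ⟨s, hsS⟩
    have := hclos hsS
    by_contra h
    rw [Set.not_nonempty_iff_eq_empty] at h
    rw [h, closure_empty] at this
    exact this
  obtain ⟨f, hf⟩ := Set.Countable.exists_eq_range hccount hcne
  -- weights
  have hw0 : ∀ n : ℕ, (0:ℝ) < (1/2 : ℝ)^(n+1) := fun n => by positivity
  have hwsummable : Summable (fun n : ℕ => (1/2 : ℝ)^(n+1)) := by
    have : Summable (fun n : ℕ => (1/2 : ℝ)^n) := summable_geometric_two
    simpa [pow_succ] using this.mul_right (1/2 : ℝ)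
  have hwtot : ∑' n : ℕ, (1/2 : ℝ)^(n+1) = 1 := by
    have h1 : ∑' n : ℕ, (1/2 : ℝ)^n = 2 := tsum_geometric_two
    have h2 : ∑' n : ℕ, ((1/2 : ℝ)^n * (1/2)) = 2 * (1/2) := by
      rw [tsum_mul_right, h1]
    calc ∑' n : ℕ, (1/2 : ℝ)^(n+1) = ∑' n : ℕ, ((1/2 : ℝ)^n * (1/2)) := by
          apply tsum_congr; intro n; rw [pow_succ]
      _ = 1 := by rw [h2]; norm_num
  have hsum : ∀ x, Summable (fun n : ℕ => (1/2 : ℝ)^(n+1) * g (f n) x) := by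
    intro x
    apply Summable.of_nonneg_of_le (fun n => mul_nonneg (hw0 n).le (hg0 _ x))
      (fun n => mul_le_mul_of_nonneg_left (hgD _ x) (hw0 n).le)
    exact hwsummable.mul_right D
  refine ⟨fun x => ∑' n : ℕ, (1/2 : ℝ)^(n+1) * g (f n) x, ?_, ?_, ?_, ?_⟩
  · -- increasing
    intro x y hxy
    exact Summable.tsum_le_tsum (fun n => mul_le_mul_of_nonneg_left (hgmono _ x y hxy) (hw0 n).le)
      (hsum y) (hsum x)
  · -- Lipschitz
    intro x y
    have hsub : Summable (fun n : ℕ => (1/2:ℝ)^(n+1) * g (f n) x - (1/2:ℝ)^(n+1) * g (f n) y) :=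
      (hsum x).sub (hsum y)
    have habs : Summable (fun n : ℕ => |(1/2:ℝ)^(n+1) * g (f n) x - (1/2:ℝ)^(n+1) * g (f n) y|) :=
      hsub.abs
    have h1 : (∑' n : ℕ, (1/2:ℝ)^(n+1) * g (f n) x) - (∑' n : ℕ, (1/2:ℝ)^(n+1) * g (f n) y)
        = ∑' n : ℕ, ((1/2:ℝ)^(n+1) * g (f n) x - (1/2:ℝ)^(n+1) * g (f n) y) :=
      (Summable.tsum_sub (hsum x) (hsum y)).symm
    rw [h1]
    calc |∑' n : ℕ, ((1/2:ℝ)^(n+1) * g (f n) x - (1/2:ℝ)^(n+1) * g (f n) y)|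
        ≤ ∑' n : ℕ, |(1/2:ℝ)^(n+1) * g (f n) x - (1/2:ℝ)^(n+1) * g (f n) y| := by
          have := norm_tsum_le_tsum_norm
            (f := fun n : ℕ => (1/2:ℝ)^(n+1) * g (f n) x - (1/2:ℝ)^(n+1) * g (f n) y)
            (by simpa [Real.norm_eq_abs] using habs)
          simpa [Real.norm_eq_abs] using this
      _ ≤ ∑' n : ℕ, (1/2:ℝ)^(n+1) * dist x y := by
          apply Summable.tsum_le_tsum _ habs (hwsummable.mul_right _)
          intro n
          rw [← mul_sub, abs_mul, abs_of_nonneg (hw0 n).le]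
          exact mul_le_mul_of_nonneg_left (hglip _ x y) (hw0 n).le
      _ = dist x y := by rw [tsum_mul_right, hwtot, one_mul]
  · -- bound
    intro x
    rw [abs_le]
    constructor
    · have h0 : (0:ℝ) ≤ ∑' n : ℕ, (1/2:ℝ)^(n+1) * g (f n) x :=
        tsum_nonneg (fun n => mul_nonneg (hw0 n).le (hg0 _ x))
      linarith
    · calc (∑' n : ℕ, (1/2:ℝ)^(n+1) * g (f n) x) ≤ ∑' n : ℕ, (1/2:ℝ)^(n+1) * D :=
          Summable.tsum_le_tsum (fun n => mul_le_mul_of_nonneg_left (hgD _ x) (hw0 n).le)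
            (hsum x) (hwsummable.mul_right D)
        _ = D := by rw [tsum_mul_right, hwtot, one_mul]
  · -- strictness
    intro x hxS y hyS ⟨hxy, hne⟩
    have hyx : ¬ r y x := fun h => hne (hantisymm x y hxy h)
    have hε0 : 0 < dist x y := dist_pos.2 hne
    have hDε : dist x y ≤ D := Metric.dist_le_diam_of_mem hScomp.isBounded hxS hyS
    obtain ⟨z, hzc, hzlt⟩ := Metric.mem_closure_iff.1 (hclos hyS) (dist x y / 2) (by positivity)
    obtain ⟨n, hn⟩ : ∃ n, f n = z := by
      have : z ∈ Set.range f := hf ▸ hzc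
      exact this
    have hnrzx : ¬ r z x := by
      intro h
      have hkey : dist x y ≤ dist z y := by
        by_cases hzx : z = x
        · subst hzx; exact le_rfl
        · exact hrad2 z x y ⟨h, hzx⟩ hyx
      rw [dist_comm z y] at hkey
      linarith
    have hgy : g z y < dist x y / 2 := by
      have h' : Metric.infDist y (L z) ≤ dist y z := Metric.infDist_le_dist_of_mem (hzL z)
      calc g z y ≤ Metric.infDist y (L z) := min_le_left _ _
        _ ≤ dist y z := h'
        _ < dist x y / 2 := hzlt
    have hgx : dist x y / 2 < g z x := by
      apply lt_min
      · have h1 : dist x z ≤ Metric.infDist x (L z) := hlow z x hnrzx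
        have h2 : dist x y ≤ dist x z + dist z y := dist_triangle x z y
        rw [dist_comm z y] at h2
        linarith
      · linarith
    apply Summable.tsum_lt_tsum (i := n)
      (fun m => mul_le_mul_of_nonneg_left (hgmono _ x y hxy) (hw0 m).le) ?_ (hsum y) (hsum x)
    exact mul_lt_mul_of_pos_left (by rw [hn]; exact lt_trans hgy hgx) (hw0 n)
end

section
/- Let (X, d, ≽) be a radial partially ordered metric space such that (X,d) is σ-compact. Then there exists a Lipschitz function F : X → ℝ such that F(x) > F(y) for every x,y ∈ X with x ≻ y. -/
open Metric

private lemma le_infDist_aux {X : Type*} [MetricSpace X] {s : Set X} (hs : s.Nonempty)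
    {x : X} {c : ℝ} (h : ∀ z ∈ s, c ≤ dist x z) : c ≤ infDist x s := by
  rw [infDist_eq_iInf]
  haveI : Nonempty s := hs.to_subtype
  exact le_ciInf fun z => h z z.2

/-- squashing function `t / (1 + t)`. -/
private lemma g_props : ∀ s t : ℝ, 0 ≤ s → 0 ≤ t → s ≤ t →
    t / (1 + t) - s / (1 + s) ≤ t - s ∧ s / (1 + s) ≤ t / (1 + t) := by
  intro s t hs ht hst
  have h1 : (0:ℝ) < 1 + s := by linarith
  have h2 : (0:ℝ) < 1 + t := by linarith
  constructor
  · rw [div_sub_div _ _ (ne_of_gt h2) (ne_of_gt h1), div_le_iff₀ (by positivity)]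
    nlinarith [mul_nonneg (sub_nonneg.2 hst) hs, mul_nonneg (sub_nonneg.2 hst) ht,
      mul_nonneg (mul_nonneg (sub_nonneg.2 hst) hs) ht]
  · rw [div_le_div_iff₀ h1 h2]; nlinarith

/-- **Theorem 8.** On a radial partially ordered σ-compact metric space there
is a strictly increasing Lipschitz function `F : X → ℝ` (i.e. `F x > F y`
whenever `x ≻ y`). Here `r x y` means `x ≽ y`. -/
theorem exists_strictly_increasing_lipschitz_of_sigmaCompact
    {X : Type*} [MetricSpace X] [SigmaCompactSpace X] (r : X → X → Prop)
    (hrefl : ∀ x, r x x)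
    (htrans : ∀ x y z, r x y → r y z → r x z)
    (hantisymm : ∀ x y, r x y → r y x → x = y)
    (hrad1 : ∀ x y z, ¬ r y x → r y z ∧ y ≠ z → dist x y ≤ dist x z)
    (hrad2 : ∀ x y z, r x y ∧ x ≠ y → ¬ r z y → dist y z ≤ dist x z) :
    ∃ F : X → ℝ, ∃ K : ℝ, 0 ≤ K ∧
      (∀ x y, |F x - F y| ≤ K * dist x y) ∧
      ∀ x y, r x y ∧ x ≠ y → F y < F x := by
  rcases isEmpty_or_nonempty X with hX | hX
  · exact ⟨fun _ => 0, 0, le_refl 0, fun x => hX.elim x, fun x => hX.elim x⟩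
  -- σ-compact metric spaces are second countable, hence separable
  obtain ⟨a, ha⟩ : ∃ a : ℕ → X, DenseRange a := ⟨TopologicalSpace.denseSeq X,
    TopologicalSpace.denseRange_denseSeq X⟩
  -- the lower-set distance functions
  set φ : ℕ → X → ℝ := fun n x => infDist x {z | r (a n) z} with hφ
  have hne : ∀ n, Set.Nonempty {z | r (a n) z} := fun n => ⟨a n, hrefl (a n)⟩
  have hφ0 : ∀ n x, 0 ≤ φ n x := fun n x => infDist_nonneg
  -- each φ n is 1-Lipschitz
  have hlip : ∀ n x y, φ n x - φ n y ≤ dist x y := by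
    intro n x y
    have := infDist_le_infDist_add_dist (x := x) (y := y) (s := {z | r (a n) z})
    linarith
  -- weak monotonicity of φ n
  have hmono : ∀ n x y, r x y → x ≠ y → φ n y ≤ φ n x := by
    intro n x y hxy hne'
    refine le_infDist_aux (hne n) ?_
    intro z hz
    by_cases hzy : r z y
    · have : y ∈ {z | r (a n) z} := htrans _ _ _ hz hzy
      rw [hφ]
      simp only [infDist_zero_of_mem this]
      exact dist_nonneg
    · calc φ n y ≤ dist y z := infDist_le_dist_of_mem hz
        _ ≤ dist x z := hrad2 x y z ⟨hxy, hne'⟩ hzy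
  -- strict separation: for x ≻ y there is n with φ n y < φ n x
  have hsep : ∀ x y, r x y → x ≠ y → ∃ n, φ n y < φ n x := by
    intro x y hxy hne'
    have hd : 0 < dist x y := dist_pos.mpr hne'
    set ε : ℝ := dist x y / 4 with hε
    have hεpos : 0 < ε := by positivity
    obtain ⟨n, hn⟩ : ∃ n, a n ∈ ball y ε := by
      have := ha.exists_mem_open isOpen_ball ⟨y, mem_ball_self hεpos⟩
      simpa using this
    rw [mem_ball, dist_comm] at hn
    have hnyx : ¬ r y x := fun h => hne' (hantisymm _ _ hxy h)
    have hφy : φ n y ≤ dist y (a n) := infDist_le_dist_of_mem (hrefl (a n))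
    have hxan : 3 * ε < dist x (a n) := by
      have := dist_triangle x (a n) y
      rw [dist_comm (a n) y] at this
      have h4 : dist x y = 4 * ε := by rw [hε]; ring
      linarith
    refine ⟨n, lt_of_lt_of_le (lt_of_le_of_lt hφy hn) ?_⟩
    refine le_infDist_aux (hne n) ?_
    intro z hz
    by_contra hlt
    push_neg at hlt
    by_cases hanz : a n = z
    · rw [hanz] at hxan; linarith
    · by_cases hnax : r (a n) x
      · have hanx : a n ≠ x := by
          intro h; rw [h] at hxan; simp at hxan; linarith
        have := hrad2 (a n) x y ⟨hnax, hanx⟩ hnyx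
        rw [dist_comm (a n) y] at this
        have h4 : dist x y = 4 * ε := by rw [hε]; ring
        linarith
      · have := hrad1 x (a n) z hnax ⟨hz, hanz⟩
        linarith
  -- assemble the sum
  set g : ℝ → ℝ := fun t => t / (1 + t) with hg
  have hg0 : ∀ t : ℝ, 0 ≤ t → 0 ≤ g t ∧ g t ≤ 1 := by
    intro t ht
    constructor
    · positivity
    · rw [hg]; simp only
      rw [div_le_one (by linarith)]; linarith
  set f : ℕ → X → ℝ := fun n x => (1/2 : ℝ)^n * g (φ n x) with hf
  have hf0 : ∀ n x, 0 ≤ f n x := fun n x => by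
    have := (hg0 _ (hφ0 n x)).1; positivity
  have hfbd : ∀ n x, f n x ≤ (1/2 : ℝ)^n := by
    intro n x
    have := (hg0 _ (hφ0 n x)).2
    calc f n x ≤ (1/2:ℝ)^n * 1 := by
          apply mul_le_mul_of_nonneg_left this (by positivity)
      _ = (1/2:ℝ)^n := by ring
  have hsummable : ∀ x, Summable (fun n => f n x) := by
    intro x
    apply Summable.of_nonneg_of_le (fun n => hf0 n x) (fun n => hfbd n x)
    exact summable_geometric_of_lt_one (by norm_num) (by norm_num)
  refine ⟨fun x => ∑' n, f n x, 2, by norm_num, ?_, ?_⟩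
  · -- Lipschitz
    intro x y
    have key : ∀ n, |f n x - f n y| ≤ (1/2:ℝ)^n * dist x y := by
      intro n
      have h1 : |g (φ n x) - g (φ n y)| ≤ dist x y := by
        rcases le_total (φ n y) (φ n x) with h | h
        · have := (g_props _ _ (hφ0 n y) (hφ0 n x) h).1
          have hm := (g_props _ _ (hφ0 n y) (hφ0 n x) h).2
          rw [abs_of_nonneg (by linarith)]
          have := hlip n x y
          linarith
        · have := (g_props _ _ (hφ0 n x) (hφ0 n y) h).1
          have hm := (g_props _ _ (hφ0 n x) (hφ0 n y) h).2
          rw [abs_of_nonpos (by linarith), dist_comm x y]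
          have := hlip n y x
          linarith
      calc |f n x - f n y| = (1/2:ℝ)^n * |g (φ n x) - g (φ n y)| := by
            rw [hf]; simp only
            rw [← mul_sub, abs_mul, abs_of_nonneg (by positivity : (0:ℝ) ≤ (1/2:ℝ)^n)]
        _ ≤ (1/2:ℝ)^n * dist x y := by
            apply mul_le_mul_of_nonneg_left h1 (by positivity)
    have hs1 := hsummable x
    have hs2 := hsummable y
    have habs : Summable (fun n => |f n x - f n y|) := by
      apply Summable.of_nonneg_of_le (fun n => abs_nonneg _) key
      exact Summable.mul_right _ (summable_geometric_of_lt_one (by norm_num) (by norm_num))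
    calc |∑' n, f n x - ∑' n, f n y| = |∑' n, (f n x - f n y)| := by
          rw [← Summable.tsum_sub hs1 hs2]
      _ ≤ ∑' n, |f n x - f n y| := by
          have h := norm_tsum_le_tsum_norm (f := fun n => f n x - f n y)
            (by simpa [Real.norm_eq_abs] using habs)
          simpa [Real.norm_eq_abs] using h
      _ ≤ ∑' n, (1/2:ℝ)^n * dist x y := by
          apply Summable.tsum_le_tsum key habs
          exact Summable.mul_right _ (summable_geometric_of_lt_one (by norm_num) (by norm_num))
      _ = 2 * dist x y := by
          rw [tsum_mul_right, tsum_geometric_of_lt_one (by norm_num) (by norm_num)]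
          norm_num
  · -- strict monotonicity
    rintro x y ⟨hxy, hne'⟩
    obtain ⟨n, hn⟩ := hsep x y hxy hne'
    show ∑' m, f m y < ∑' m, f m x
    refine Summable.tsum_lt_tsum_of_nonneg (i := n) (fun m => hf0 m y) (fun m => ?_) ?_ (hsummable x)
    · rw [hf]; simp only
      apply mul_le_mul_of_nonneg_left _ (by positivity)
      by_cases hm : x = y
      · rw [hm]
      · exact (g_props _ _ (hφ0 m y) (hφ0 m x) (hmono m x y hxy hm)).2
    · rw [hf]; simp only
      apply mul_lt_mul_of_pos_left _ (by positivity)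
      have h1 : (0:ℝ) < 1 + φ n y := by have := hφ0 n y; linarith
      have h2 : (0:ℝ) < 1 + φ n x := by have := hφ0 n x; linarith
      rw [hg]; simp only
      rw [div_lt_div_iff₀ h1 h2]
      nlinarith [hφ0 n y, hφ0 n x]
end

section
/- Let (X, d, ≽) be a radially convex linearly ordered metric space (i.e., ≽ is a total order) such that (X,d) is σ-compact. Then there exists a Lipschitz function F : X → ℝ such that for all x,y ∈ X, x ≽ y if and only if F(x) ≥ F(y). -/
open Classical in
/-- Signed distance to a base point `q`. -/
noncomputable def rcGfun {X : Type*} [MetricSpace X] (r : X → X → Prop) (q x : X) : ℝ :=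
  if r x q then dist x q else -dist x q

/-- Clamped signed distance. -/
noncomputable def rcHfun {X : Type*} [MetricSpace X] (r : X → X → Prop) (q x : X) : ℝ :=
  max (min (rcGfun r q x) 1) (-1)

section aux
variable {X : Type*} [MetricSpace X] (r : X → X → Prop)

lemma rcHfun_abs_le (q x : X) : |rcHfun r q x| ≤ 1 := by
  rw [abs_le]
  constructor
  · exact le_max_right _ _
  · exact max_le (min_le_right _ _) (by norm_num)

lemma rcGfun_mono (htrans : ∀ x y z, r x y → r y z → r x z)
    (htotal : ∀ x y, r x y ∨ r y x) (hrefl : ∀ x, r x x)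
    (hrc : ∀ x y z, r x y ∧ x ≠ y → r y z ∧ y ≠ z →
      max (dist x y) (dist y z) ≤ dist x z)
    {x y : X} (q : X) (hxy : r x y) : rcGfun r q y ≤ rcGfun r q x := by
  unfold rcGfun
  by_cases hx : r x q <;> by_cases hy : r y q <;> simp only [hx, hy, if_true, if_false]
  · -- x ≽ y ≽ q : dist y q ≤ dist x q
    rcases eq_or_ne x y with rfl | hxy'
    · exact le_rfl
    rcases eq_or_ne y q with rfl | hyq
    · simpa using dist_nonneg
    exact le_trans (le_max_right (dist x y) (dist y q)) (hrc x y q ⟨hxy, hxy'⟩ ⟨hy, hyq⟩)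
  · exact le_trans (neg_nonpos_of_nonneg dist_nonneg) dist_nonneg
  · exact absurd (htrans x y q hxy hy) hx
  · -- q ≻ x ≽ y : -dist y q ≤ -dist x q i.e. dist x q ≤ dist y q
    rcases eq_or_ne x y with rfl | hxy'
    · exact le_rfl
    have hqx : r q x := (htotal q x).resolve_right hx
    have hqnex : q ≠ x := fun h => hx (h ▸ hrefl x)
    have := hrc q x y ⟨hqx, hqnex⟩ ⟨hxy, hxy'⟩
    rw [neg_le_neg_iff]
    calc dist x q = dist q x := dist_comm _ _
    _ ≤ dist q y := le_trans (le_max_left _ _) this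
    _ = dist y q := dist_comm _ _

lemma rcGfun_lip (htotal : ∀ x y, r x y ∨ r y x) (hrefl : ∀ x, r x x)
    (hrc : ∀ x y z, r x y ∧ x ≠ y → r y z ∧ y ≠ z →
      max (dist x y) (dist y z) ≤ dist x z)
    (q x y : X) : |rcGfun r q x - rcGfun r q y| ≤ 2 * dist x y := by
  have key : ∀ a b : X, r a q → ¬ r b q → rcGfun r q a - rcGfun r q b ≤ 2 * dist a b := by
    intro a b ha hb
    have hqb : r q b := (htotal q b).resolve_right hb
    have hqneb : q ≠ b := fun h => hb (h ▸ hrefl b)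
    unfold rcGfun
    simp only [ha, hb, if_true, if_false, sub_neg_eq_add]
    rcases eq_or_ne a q with rfl | haq
    · simp only [dist_self, zero_add]
      calc dist b a ≤ dist a b + dist a b := by rw [dist_comm]; nlinarith [dist_nonneg (x := a) (y := b)]
      _ = 2 * dist a b := by ring
    have := hrc a q b ⟨ha, haq⟩ ⟨hqb, hqneb⟩
    have h1 : dist a q ≤ dist a b := le_trans (le_max_left _ _) this
    have h2 : dist b q ≤ dist a b := by
      rw [dist_comm]; exact le_trans (le_max_right _ _) this
    linarith
  by_cases hx : r x q <;> by_cases hy : r y q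
  · unfold rcGfun
    simp only [hx, hy, if_true]
    calc |dist x q - dist y q| ≤ dist x y := abs_dist_sub_le _ _ _
    _ ≤ 2 * dist x y := by nlinarith [dist_nonneg (x := x) (y := y)]
  · have := key x y hx hy
    have hge : 0 ≤ rcGfun r q x - rcGfun r q y := by
      unfold rcGfun; simp only [hx, hy, if_true, if_false]
      have := dist_nonneg (x := x) (y := q); have := dist_nonneg (x := y) (y := q); linarith
    rw [abs_of_nonneg hge]; exact this
  · have := key y x hy hx
    have hge : 0 ≤ rcGfun r q y - rcGfun r q x := by
      unfold rcGfun; simp only [hx, hy, if_true, if_false]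
      have := dist_nonneg (x := x) (y := q); have := dist_nonneg (x := y) (y := q); linarith
    rw [abs_sub_comm, abs_of_nonneg hge, dist_comm x y]
    exact this
  · unfold rcGfun
    simp only [hx, hy, if_false]
    rw [neg_sub_neg]
    calc |dist y q - dist x q| ≤ dist y x := abs_dist_sub_le _ _ _
    _ = dist x y := dist_comm _ _
    _ ≤ 2 * dist x y := by nlinarith [dist_nonneg (x := x) (y := y)]

lemma rcHfun_mono (htrans : ∀ x y z, r x y → r y z → r x z)
    (htotal : ∀ x y, r x y ∨ r y x) (hrefl : ∀ x, r x x)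
    (hrc : ∀ x y z, r x y ∧ x ≠ y → r y z ∧ y ≠ z →
      max (dist x y) (dist y z) ≤ dist x z)
    {x y : X} (q : X) (hxy : r x y) : rcHfun r q y ≤ rcHfun r q x :=
  max_le_max (min_le_min (rcGfun_mono r htrans htotal hrefl hrc q hxy) le_rfl) le_rfl

lemma rcHfun_lip (htotal : ∀ x y, r x y ∨ r y x) (hrefl : ∀ x, r x x)
    (hrc : ∀ x y z, r x y ∧ x ≠ y → r y z ∧ y ≠ z →
      max (dist x y) (dist y z) ≤ dist x z)
    (q x y : X) : |rcHfun r q x - rcHfun r q y| ≤ 2 * dist x y := by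
  calc |rcHfun r q x - rcHfun r q y|
      ≤ |min (rcGfun r q x) 1 - min (rcGfun r q y) 1| := abs_max_sub_max_le_abs _ _ _
    _ ≤ max |rcGfun r q x - rcGfun r q y| |(1:ℝ) - 1| := abs_min_sub_min_le_max _ _ _ _
    _ = |rcGfun r q x - rcGfun r q y| := by simp
    _ ≤ 2 * dist x y := rcGfun_lip r htotal hrefl hrc q x y

lemma rcHfun_strict (htrans : ∀ x y z, r x y → r y z → r x z)
    (hantisymm : ∀ x y, r x y → r y x → x = y)
    (htotal : ∀ x y, r x y ∨ r y x) (hrefl : ∀ x, r x x)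
    (hrc : ∀ x y z, r x y ∧ x ≠ y → r y z ∧ y ≠ z →
      max (dist x y) (dist y z) ≤ dist x z)
    {x y q : X} (hxy : r x y) (hne : x ≠ y)
    (hq1 : dist q y < dist x y / 2) (hq2 : dist q y < 1 / 2) :
    rcHfun r q y < rcHfun r q x := by
  have hdxy : 0 < dist x y := dist_pos.mpr hne
  have hxq : r x q := by
    by_contra hx
    have hqx : r q x := (htotal q x).resolve_right hx
    have hqnex : q ≠ x := fun h => hx (h ▸ hrefl x)
    have := hrc q x y ⟨hqx, hqnex⟩ ⟨hxy, hne⟩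
    have : dist x y ≤ dist q y := le_trans (le_max_right _ _) this
    linarith
  have hxneq : x ≠ q := by
    intro h
    rw [h] at hq1
    linarith [dist_nonneg (x := q) (y := y)]
  by_cases hqy : r q y
  · -- h q y ≤ 0 < h q x
    have hgy : rcGfun r q y ≤ 0 := by
      unfold rcGfun
      rcases eq_or_ne q y with rfl | hqney
      · simp [hrefl]
      · have hnyq : ¬ r y q := fun h => hqney (hantisymm q y hqy h)
        simp only [hnyq, if_false]
        exact neg_nonpos_of_nonneg dist_nonneg
    have hy0 : rcHfun r q y ≤ 0 :=
      max_le (le_trans (min_le_left _ _) hgy) (by norm_num)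
    have hgx : 0 < rcGfun r q x := by
      unfold rcGfun; simp only [hxq, if_true]; exact dist_pos.mpr hxneq
    have hx0 : 0 < rcHfun r q x :=
      lt_max_of_lt_left (lt_min hgx one_pos)
    exact lt_of_le_of_lt hy0 hx0
  · -- y ≻ q
    have hyq : r y q := (htotal y q).resolve_right hqy
    have hyneq : y ≠ q := fun h => hqy (h ▸ hrefl q)
    have hgy : rcGfun r q y = dist y q := by unfold rcGfun; simp [hyq]
    have hgyval : rcGfun r q y < 1/2 := by rw [hgy, dist_comm]; exact hq2
    have hgynn : 0 ≤ rcGfun r q y := by rw [hgy]; exact dist_nonneg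
    have hhy : rcHfun r q y = rcGfun r q y := by
      unfold rcHfun
      rw [min_eq_left (by linarith), max_eq_left (by linarith)]
    have hgx : dist x y ≤ rcGfun r q x := by
      unfold rcGfun; simp only [hxq, if_true]
      exact le_trans (le_max_left _ _) (hrc x y q ⟨hxy, hne⟩ ⟨hyq, hyneq⟩)
    have hgybig : 2 * rcGfun r q y < dist x y := by rw [hgy, dist_comm]; linarith
    rw [hhy]
    rcases le_or_gt 1 (rcGfun r q x) with h1 | h1
    · have : rcHfun r q x = 1 := by
        unfold rcHfun; rw [min_eq_right h1, max_eq_left (by norm_num)]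
      rw [this]; linarith
    · have : rcHfun r q x = rcGfun r q x := by
        unfold rcHfun
        rw [min_eq_left (le_of_lt h1), max_eq_left (by linarith)]
      rw [this]; linarith

end aux

/-- **Corollary 9.** A radially convex linear order on a σ-compact metric
space is represented by a Lipschitz function. Here `r x y` means `x ≽ y`. -/
theorem exists_lipschitz_representation_of_radiallyConvex_loset
    {X : Type*} [MetricSpace X] [SigmaCompactSpace X] (r : X → X → Prop)
    (hrefl : ∀ x, r x x)
    (htrans : ∀ x y z, r x y → r y z → r x z)
    (hantisymm : ∀ x y, r x y → r y x → x = y)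
    (htotal : ∀ x y, r x y ∨ r y x)
    (hrc : ∀ x y z, r x y ∧ x ≠ y → r y z ∧ y ≠ z →
      max (dist x y) (dist y z) ≤ dist x z) :
    ∃ F : X → ℝ, ∃ K : ℝ, 0 ≤ K ∧
      (∀ x y, |F x - F y| ≤ K * dist x y) ∧
      ∀ x y, r x y ↔ F y ≤ F x := by
  rcases isEmpty_or_nonempty X with hX | hX
  · exact ⟨fun _ => 0, 0, le_rfl, fun x => hX.elim x, fun x => hX.elim x⟩
  set u : ℕ → X := TopologicalSpace.denseSeq X with hu
  have hdense : DenseRange u := TopologicalSpace.denseRange_denseSeq X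
  set F : X → ℝ := fun x => ∑' n : ℕ, (1/2:ℝ)^n * rcHfun r (u n) x with hF
  have hsum : ∀ x, Summable (fun n : ℕ => (1/2:ℝ)^n * rcHfun r (u n) x) := by
    intro x
    apply Summable.of_norm_bounded (g := fun n => (1/2:ℝ)^n) summable_geometric_two
    intro n
    rw [norm_mul, norm_pow]
    simp only [norm_div, norm_one, Real.norm_ofNat]
    calc (1/2:ℝ)^n * ‖rcHfun r (u n) x‖ ≤ (1/2:ℝ)^n * 1 := by
          apply mul_le_mul_of_nonneg_left _ (by positivity)
          exact rcHfun_abs_le r (u n) x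
      _ = (1/2:ℝ)^n := mul_one _
  -- weak monotonicity
  have hmono : ∀ x y, r x y → F y ≤ F x := by
    intro x y hxy
    apply Summable.tsum_le_tsum _ (hsum y) (hsum x)
    intro n
    exact mul_le_mul_of_nonneg_left
      (rcHfun_mono r htrans htotal hrefl hrc (u n) hxy) (by positivity)
  -- strict monotonicity
  have hstrict : ∀ x y, r x y → x ≠ y → F y < F x := by
    intro x y hxy hne
    have hdxy : 0 < dist x y := dist_pos.mpr hne
    set ε := min (dist x y / 2) (1/2) with hε
    have hεpos : 0 < ε := lt_min (by linarith) (by norm_num)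
    obtain ⟨n, hn⟩ : ∃ n, dist (u n) y < ε := by
      have := Metric.denseRange_iff.mp hdense y ε hεpos
      obtain ⟨n, hn⟩ := this
      exact ⟨n, by rwa [dist_comm]⟩
    have hq1 : dist (u n) y < dist x y / 2 := lt_of_lt_of_le hn (min_le_left _ _)
    have hq2 : dist (u n) y < 1/2 := lt_of_lt_of_le hn (min_le_right _ _)
    have hkey := rcHfun_strict r htrans hantisymm htotal hrefl hrc hxy hne hq1 hq2
    have hdiff : 0 < F x - F y := by
      rw [hF]
      rw [← Summable.tsum_sub (hsum x) (hsum y)]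
      have hsub : Summable (fun m : ℕ => (1/2:ℝ)^m * rcHfun r (u m) x - (1/2:ℝ)^m * rcHfun r (u m) y) :=
        (hsum x).sub (hsum y)
      have hterm : ∀ m : ℕ, 0 ≤ (1/2:ℝ)^m * rcHfun r (u m) x - (1/2:ℝ)^m * rcHfun r (u m) y := by
        intro m
        have := rcHfun_mono r htrans htotal hrefl hrc (u m) hxy
        nlinarith [pow_pos (by norm_num : (0:ℝ) < 1/2) m]
      have hle := Summable.le_tsum hsub n (fun m _ => hterm m)
      have : 0 < (1/2:ℝ)^n * rcHfun r (u n) x - (1/2:ℝ)^n * rcHfun r (u n) y := by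
        have := pow_pos (by norm_num : (0:ℝ) < 1/2) n
        nlinarith
      linarith
    linarith
  refine ⟨F, 4, by norm_num, ?_, ?_⟩
  · intro x y
    have h1 : F x - F y = ∑' n : ℕ, ((1/2:ℝ)^n * rcHfun r (u n) x - (1/2:ℝ)^n * rcHfun r (u n) y) :=
      (Summable.tsum_sub (hsum x) (hsum y)).symm
    rw [h1]
    have hnormsum : Summable (fun n : ℕ =>
        ‖(1/2:ℝ)^n * rcHfun r (u n) x - (1/2:ℝ)^n * rcHfun r (u n) y‖) := by
      apply Summable.of_nonneg_of_le (fun n => norm_nonneg _)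
        (fun n => ?_) (summable_geometric_two.mul_right (2 * dist x y))
      rw [← mul_sub, norm_mul, norm_pow]
      simp only [norm_div, norm_one, Real.norm_ofNat]
      apply mul_le_mul_of_nonneg_left _ (by positivity)
      exact rcHfun_lip r htotal hrefl hrc (u n) x y
    calc |∑' n : ℕ, ((1/2:ℝ)^n * rcHfun r (u n) x - (1/2:ℝ)^n * rcHfun r (u n) y)|
        ≤ ∑' n : ℕ, ‖(1/2:ℝ)^n * rcHfun r (u n) x - (1/2:ℝ)^n * rcHfun r (u n) y‖ :=
          norm_tsum_le_tsum_norm hnormsum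
      _ ≤ ∑' n : ℕ, (1/2:ℝ)^n * (2 * dist x y) := by
          apply Summable.tsum_le_tsum _ hnormsum (summable_geometric_two.mul_right _)
          intro n
          rw [← mul_sub, norm_mul, norm_pow]
          simp only [norm_div, norm_one, Real.norm_ofNat]
          apply mul_le_mul_of_nonneg_left _ (by positivity)
          exact rcHfun_lip r htotal hrefl hrc (u n) x y
      _ = (∑' n : ℕ, (1/2:ℝ)^n) * (2 * dist x y) := tsum_mul_right
      _ = 2 * (2 * dist x y) := by rw [tsum_geometric_two]
      _ = 4 * dist x y := by ring
  · intro x y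
    constructor
    · exact hmono x y
    · intro hFle
      by_contra hxy
      have hyx : r y x := (htotal x y).resolve_left hxy
      have hne : y ≠ x := fun h => hxy (h ▸ hrefl x)
      have := hstrict y x hyx hne
      linarith
end

section
/- Let ≿ be a total preorder on a compact metric space X = (X,d) such that ≿ is a closed subset of X × X. Then there exists a continuous function u : X → ℝ such that for all x,y ∈ X, x ≿ y if and only if u(x) ≥ u(y). -/
open Set Filter Topology

namespace DebreuAux

variable {X : Type*} [TopologicalSpace X]

/-- `s` is an upper set with respect to the relation `r` (where `r y x` means `y ≿ x`). -/
def Up (r : X → X → Prop) (s : Set X) : Prop := ∀ ⦃x y : X⦄, x ∈ s → r y x → y ∈ s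

/-- An order-compatible variant of Mathlib's `Urysohns.CU` structure: a pair of a closed
set `C` inside an open upper set `U`, together with the interposition property `hP`. -/
structure OCU (r : X → X → Prop) where
  protected C : Set X
  protected U : Set X
  protected closed_C : IsClosed C
  protected open_U : IsOpen U
  protected up_U : Up r U
  protected subset : C ⊆ U
  protected hP : ∀ {c u : Set X}, IsClosed c → IsOpen u → Up r u → c ⊆ u →
    ∃ v v' : Set X, IsOpen v ∧ Up r v ∧ IsClosed v' ∧ Up r v' ∧ c ⊆ v ∧ v ⊆ v' ∧ v' ⊆ u

namespace OCU

variable {r : X → X → Prop}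

noncomputable def left (c : OCU r) : OCU r where
  C := c.C
  U := (c.hP c.closed_C c.open_U c.up_U c.subset).choose
  closed_C := c.closed_C
  open_U := (c.hP c.closed_C c.open_U c.up_U c.subset).choose_spec.choose_spec.1
  up_U := (c.hP c.closed_C c.open_U c.up_U c.subset).choose_spec.choose_spec.2.1
  subset := (c.hP c.closed_C c.open_U c.up_U c.subset).choose_spec.choose_spec.2.2.2.2.1
  hP := c.hP

noncomputable def right (c : OCU r) : OCU r where
  C := (c.hP c.closed_C c.open_U c.up_U c.subset).choose_spec.choose
  U := c.U
  closed_C := (c.hP c.closed_C c.open_U c.up_U c.subset).choose_spec.choose_spec.2.2.1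
  open_U := c.open_U
  up_U := c.up_U
  subset := (c.hP c.closed_C c.open_U c.up_U c.subset).choose_spec.choose_spec.2.2.2.2.2.2
  hP := c.hP

@[simp] theorem right_U (c : OCU r) : c.right.U = c.U := rfl

theorem left_U_subset_right_C (c : OCU r) : c.left.U ⊆ c.right.C :=
  (c.hP c.closed_C c.open_U c.up_U c.subset).choose_spec.choose_spec.2.2.2.2.2.1

theorem left_U_subset (c : OCU r) : c.left.U ⊆ c.U :=
  Subset.trans c.left_U_subset_right_C c.right.subset

theorem subset_right_C (c : OCU r) : c.C ⊆ c.right.C :=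
  Subset.trans c.left.subset c.left_U_subset_right_C

/-- `n`-th approximation to the separating function. -/
noncomputable def approx : ℕ → OCU r → X → ℝ
  | 0, c, x => indicator c.Uᶜ 1 x
  | n + 1, c, x => midpoint ℝ (approx n c.left x) (approx n c.right x)

theorem approx_of_mem_C (c : OCU r) (n : ℕ) {x : X} (hx : x ∈ c.C) : c.approx n x = 0 := by
  induction n generalizing c with
  | zero => exact indicator_of_notMem (fun (hU : x ∈ c.Uᶜ) => hU <| c.subset hx) _
  | succ n ihn =>
    simp only [approx]
    rw [ihn, ihn, midpoint_self]
    exacts [c.subset_right_C hx, hx]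

theorem approx_of_nmem_U (c : OCU r) (n : ℕ) {x : X} (hx : x ∉ c.U) : c.approx n x = 1 := by
  induction n generalizing c with
  | zero =>
    rw [← mem_compl_iff] at hx
    exact indicator_of_mem hx _
  | succ n ihn =>
    simp only [approx]
    rw [ihn, ihn, midpoint_self]
    exacts [hx, fun hU => hx <| c.left_U_subset hU]

theorem approx_nonneg (c : OCU r) (n : ℕ) (x : X) : 0 ≤ c.approx n x := by
  induction n generalizing c with
  | zero => exact indicator_nonneg (fun _ _ => zero_le_one) _
  | succ n ihn =>
    simp only [approx, midpoint_eq_smul_add, invOf_eq_inv]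
    refine mul_nonneg (inv_nonneg.2 zero_le_two) (add_nonneg ?_ ?_) <;> apply ihn

theorem approx_le_one (c : OCU r) (n : ℕ) (x : X) : c.approx n x ≤ 1 := by
  induction n generalizing c with
  | zero => exact indicator_apply_le' (fun _ => le_rfl) fun _ => zero_le_one
  | succ n ihn =>
    simp only [approx, midpoint_eq_smul_add, invOf_eq_inv, smul_eq_mul, ← div_eq_inv_mul]
    have := add_le_add (ihn (left c)) (ihn (right c))
    norm_num at this
    exact Iff.mpr (div_le_one zero_lt_two) this

theorem bddAbove_range_approx (c : OCU r) (x : X) : BddAbove (range fun n => c.approx n x) :=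
  ⟨1, fun _ ⟨n, hn⟩ => hn ▸ c.approx_le_one n x⟩

theorem approx_le_approx_of_U_sub_C {c₁ c₂ : OCU r} (h : c₁.U ⊆ c₂.C) (n₁ n₂ : ℕ) (x : X) :
    c₂.approx n₂ x ≤ c₁.approx n₁ x := by
  by_cases hx : x ∈ c₁.U
  · calc
      approx n₂ c₂ x = 0 := approx_of_mem_C _ _ (h hx)
      _ ≤ approx n₁ c₁ x := approx_nonneg _ _ _
  · calc
      approx n₂ c₂ x ≤ 1 := approx_le_one _ _ _
      _ = approx n₁ c₁ x := (approx_of_nmem_U _ _ hx).symm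

theorem approx_mem_Icc_right_left (c : OCU r) (n : ℕ) (x : X) :
    c.approx n x ∈ Icc (c.right.approx n x) (c.left.approx n x) := by
  induction' n with n ihn generalizing c
  · exact ⟨le_rfl, indicator_le_indicator_of_subset (compl_subset_compl.2 c.left_U_subset)
      (fun _ => zero_le_one) _⟩
  · simp only [approx, mem_Icc]
    refine ⟨midpoint_le_midpoint ?_ (ihn _).1, midpoint_le_midpoint (ihn _).2 ?_⟩ <;>
      apply approx_le_approx_of_U_sub_C
    exacts [left_U_subset_right_C _, left_U_subset_right_C _]

theorem approx_le_succ (c : OCU r) (n : ℕ) (x : X) : c.approx n x ≤ c.approx (n + 1) x := by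
  induction' n with n ihn generalizing c
  · simp only [approx, right_U, right_le_midpoint]
    exact (approx_mem_Icc_right_left c 0 x).2
  · rw [approx, approx]
    exact midpoint_le_midpoint (ihn _) (ihn _)

theorem approx_mono (c : OCU r) (x : X) : Monotone fun n => c.approx n x :=
  monotone_nat_of_le_succ fun n => c.approx_le_succ n x

/-- The key new property compared to Mathlib's `Urysohns.CU`: every approximation is
antitone with respect to the relation `r`. -/
theorem approx_antitone (c : OCU r) (n : ℕ) {x y : X} (h : r x y) :
    c.approx n x ≤ c.approx n y := by
  induction n generalizing c with
  | zero =>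
    by_cases hx : x ∈ c.Uᶜ
    · have hy : y ∈ c.Uᶜ := fun hyU => hx (c.up_U hyU h)
      simp [approx, indicator_of_mem hx, indicator_of_mem hy]
    · simp only [approx]
      rw [indicator_of_notMem hx]
      exact indicator_nonneg (fun _ _ => zero_le_one) _
  | succ n ihn =>
    simp only [approx]
    exact midpoint_le_midpoint (ihn _) (ihn _)

protected noncomputable def lim (c : OCU r) (x : X) : ℝ :=
  ⨆ n, c.approx n x

theorem tendsto_approx_atTop (c : OCU r) (x : X) :
    Tendsto (fun n => c.approx n x) atTop (𝓝 <| c.lim x) :=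
  tendsto_atTop_ciSup (c.approx_mono x) ⟨1, fun _ ⟨_, hn⟩ => hn ▸ c.approx_le_one _ _⟩

theorem lim_of_mem_C (c : OCU r) (x : X) (h : x ∈ c.C) : c.lim x = 0 := by
  simp only [OCU.lim, approx_of_mem_C, h, ciSup_const]

theorem lim_of_nmem_U (c : OCU r) (x : X) (h : x ∉ c.U) : c.lim x = 1 := by
  simp only [OCU.lim, approx_of_nmem_U c _ h, ciSup_const]

theorem lim_eq_midpoint (c : OCU r) (x : X) :
    c.lim x = midpoint ℝ (c.left.lim x) (c.right.lim x) := by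
  refine tendsto_nhds_unique (c.tendsto_approx_atTop x) ((tendsto_add_atTop_iff_nat 1).1 ?_)
  simp only [approx]
  exact (c.left.tendsto_approx_atTop x).midpoint (c.right.tendsto_approx_atTop x)

theorem approx_le_lim (c : OCU r) (x : X) (n : ℕ) : c.approx n x ≤ c.lim x :=
  le_ciSup (c.bddAbove_range_approx x) _

theorem lim_nonneg (c : OCU r) (x : X) : 0 ≤ c.lim x :=
  (c.approx_nonneg 0 x).trans (c.approx_le_lim x 0)

theorem lim_le_one (c : OCU r) (x : X) : c.lim x ≤ 1 :=
  ciSup_le fun _ => c.approx_le_one _ _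

theorem lim_mem_Icc (c : OCU r) (x : X) : c.lim x ∈ Icc (0 : ℝ) 1 :=
  ⟨c.lim_nonneg x, c.lim_le_one x⟩

theorem lim_antitone (c : OCU r) {x y : X} (h : r x y) : c.lim x ≤ c.lim y :=
  ciSup_mono (c.bddAbove_range_approx y) fun n => c.approx_antitone n h

/-- Continuity of `OCU.lim`, following Mathlib's proof for `Urysohns.CU.lim`. -/
theorem continuous_lim (c : OCU r) : Continuous c.lim := by
  obtain ⟨h0, h1234, h1⟩ : 0 < (2⁻¹ : ℝ) ∧ (2⁻¹ : ℝ) < 3 / 4 ∧ (3 / 4 : ℝ) < 1 := by norm_num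
  refine
    continuous_iff_continuousAt.2 fun x =>
      (Metric.nhds_basis_closedBall_pow (h0.trans h1234) h1).tendsto_right_iff.2 fun n _ => ?_
  simp only [Metric.mem_closedBall]
  induction' n with n ihn generalizing c
  · filter_upwards with y
    rw [pow_zero]
    exact Real.dist_le_of_mem_Icc_01 (c.lim_mem_Icc _) (c.lim_mem_Icc _)
  · by_cases hxl : x ∈ c.left.U
    · filter_upwards [IsOpen.mem_nhds c.left.open_U hxl, ihn c.left] with _ hyl hyd
      rw [pow_succ', c.lim_eq_midpoint, c.lim_eq_midpoint,
        c.right.lim_of_mem_C _ (c.left_U_subset_right_C hyl),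
        c.right.lim_of_mem_C _ (c.left_U_subset_right_C hxl)]
      refine (dist_midpoint_midpoint_le _ _ _ _).trans ?_
      rw [dist_self, add_zero, div_eq_inv_mul]
      gcongr
    · replace hxl : x ∈ c.left.right.Cᶜ :=
        compl_subset_compl.2 c.left.right.subset hxl
      filter_upwards [IsOpen.mem_nhds (isOpen_compl_iff.2 c.left.right.closed_C) hxl,
        ihn c.left.right, ihn c.right] with y hyl hydl hydr
      replace hxl : x ∉ c.left.left.U :=
        compl_subset_compl.2 c.left.left_U_subset_right_C hxl
      replace hyl : y ∉ c.left.left.U :=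
        compl_subset_compl.2 c.left.left_U_subset_right_C hyl
      simp only [pow_succ, c.lim_eq_midpoint, c.left.lim_eq_midpoint,
        c.left.left.lim_of_nmem_U _ hxl, c.left.left.lim_of_nmem_U _ hyl]
      refine (dist_midpoint_midpoint_le _ _ _ _).trans ?_
      refine (div_le_div_of_nonneg_right (add_le_add (dist_midpoint_midpoint_le (V := ℝ) _ _ _ _) le_rfl)
        zero_le_two).trans ?_
      rw [dist_self, zero_add]
      set r := (3 / 4 : ℝ) ^ n
      calc _ ≤ (r / 2 + r) / 2 := by gcongr
        _ = _ := by field_simp; ring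

end OCU

section CompactTotal

variable {Y : Type*} [TopologicalSpace Y] [CompactSpace Y]

/-- In a compact space, every nonempty closed set has a minimum with respect to a
closed total transitive relation. -/
theorem exists_bot (r : Y → Y → Prop)
    (htrans : ∀ x y z, r x y → r y z → r x z) (htotal : ∀ x y, r x y ∨ r y x)
    (hclosed : IsClosed {p : Y × Y | r p.1 p.2}) {S : Set Y} (hS : IsClosed S)
    (hne : S.Nonempty) : ∃ m ∈ S, ∀ z ∈ S, r z m := by
  have hrefl : ∀ x : Y, r x x := fun x => (htotal x x).elim id id
  have hsec : ∀ a : Y, IsClosed {z : Y | r a z} :=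
    fun a => hclosed.preimage (Continuous.prodMk continuous_const continuous_id)
  haveI : Nonempty S := hne.to_subtype
  have key := IsCompact.nonempty_iInter_of_directed_nonempty_isCompact_isClosed
    (fun w : S => S ∩ {z : Y | r (w : Y) z}) ?_ ?_ ?_ ?_
  · obtain ⟨m, hm⟩ := key
    simp only [mem_iInter, mem_inter_iff] at hm
    obtain ⟨w₀, hw₀⟩ := hne
    exact ⟨m, (hm ⟨w₀, hw₀⟩).1, fun z hz => (hm ⟨z, hz⟩).2⟩
  · intro w₁ w₂
    rcases htotal (w₁ : Y) (w₂ : Y) with h | h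
    · exact ⟨w₂, fun z hz => ⟨hz.1, htrans _ _ _ h hz.2⟩, fun z hz => hz⟩
    · exact ⟨w₁, fun z hz => hz, fun z hz => ⟨hz.1, htrans _ _ _ h hz.2⟩⟩
  · exact fun w => ⟨(w : Y), w.2, hrefl _⟩
  · exact fun w => ((hS.inter (hsec _))).isCompact
  · exact fun w => hS.inter (hsec _)

/-- Dually, a maximum. -/
theorem exists_top (r : Y → Y → Prop)
    (htrans : ∀ x y z, r x y → r y z → r x z) (htotal : ∀ x y, r x y ∨ r y x)
    (hclosed : IsClosed {p : Y × Y | r p.1 p.2}) {S : Set Y} (hS : IsClosed S)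
    (hne : S.Nonempty) : ∃ m ∈ S, ∀ z ∈ S, r m z := by
  have hclosed' : IsClosed {p : Y × Y | r p.2 p.1} :=
    hclosed.preimage continuous_swap
  exact exists_bot (fun a b => r b a) (fun x y z h1 h2 => htrans z y x h2 h1)
    (fun x y => (htotal y x)) hclosed' hS hne

/-- The interposition property needed for `OCU`, in a compact space with a closed
total preorder. -/
theorem ocu_hP (r : Y → Y → Prop) (hrefl : ∀ x, r x x)
    (htrans : ∀ x y z, r x y → r y z → r x z) (htotal : ∀ x y, r x y ∨ r y x)
    (hclosed : IsClosed {p : Y × Y | r p.1 p.2}) :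
    ∀ {c u : Set Y}, IsClosed c → IsOpen u → Up r u → c ⊆ u →
      ∃ v v' : Set Y, IsOpen v ∧ Up r v ∧ IsClosed v' ∧ Up r v' ∧ c ⊆ v ∧ v ⊆ v' ∧ v' ⊆ u := by
  intro c u hc hu huup hcu
  have hsecl : ∀ a : Y, IsClosed {z : Y | r z a} :=
    fun a => hclosed.preimage (Continuous.prodMk continuous_id continuous_const)
  have hsecr : ∀ a : Y, IsClosed {z : Y | r a z} :=
    fun a => hclosed.preimage (Continuous.prodMk continuous_const continuous_id)
  rcases c.eq_empty_or_nonempty with rfl | hcne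
  · exact ⟨∅, ∅, isOpen_empty, fun x y hx _ => hx.elim, isClosed_empty,
      fun x y hx _ => hx.elim, Subset.rfl, Subset.rfl, empty_subset _⟩
  obtain ⟨m, hmc, hmmin⟩ := exists_bot r htrans htotal hclosed hc hcne
  have hmu : m ∈ u := hcu hmc
  rcases uᶜ.eq_empty_or_nonempty with hucemp | hucne
  · refine ⟨univ, univ, isOpen_univ, fun x y _ _ => mem_univ y, isClosed_univ,
      fun x y _ _ => mem_univ y, subset_univ _, Subset.rfl, ?_⟩
    rw [← compl_empty_iff.mp hucemp]
  obtain ⟨m₀, hm₀, hm₀max⟩ := exists_top r htrans htotal hclosed hu.isClosed_compl hucne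
  have hstrict : ¬ r m₀ m := fun h => hm₀ (huup hmu h)
  have hsubu : {z : Y | ¬ r m₀ z} ⊆ u := fun z hz => by
    by_contra h
    exact hz (hm₀max z h)
  by_cases hbet : ∃ z, ¬ r z m ∧ ¬ r m₀ z
  · obtain ⟨z, hz1, hz2⟩ := hbet
    refine ⟨{w : Y | ¬ r z w}, {w : Y | r w z}, (hsecr z).isOpen_compl,
      ?_, hsecl z, ?_, ?_, ?_, ?_⟩
    · intro p q hp hqp hzq
      exact hp (htrans z q p hzq hqp)
    · intro p q hp hqp
      exact htrans q p z hqp hp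
    · intro w hw hzw
      exact hz1 (htrans z w m hzw (hmmin w hw))
    · intro w hw
      exact (htotal w z).resolve_right hw
    · intro w hw
      exact hsubu fun h => hz2 (htrans m₀ w z h hw)
  · push_neg at hbet
    have hVeq : {w : Y | ¬ r m₀ w} = {w : Y | r w m} := by
      ext w
      constructor
      · intro hw
        by_contra h
        exact hw (hbet w h)
      · intro hw h
        exact hstrict (htrans m₀ w m h hw)
    have hVup : Up r {w : Y | ¬ r m₀ w} := by
      intro p q hp hqp hq
      exact hp (htrans m₀ q p hq hqp)
    refine ⟨{w : Y | ¬ r m₀ w}, {w : Y | ¬ r m₀ w}, ?_, hVup, ?_, hVup, ?_, Subset.rfl, hsubu⟩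
    · exact (hsecr m₀).isOpen_compl
    · rw [hVeq]; exact hsecl m
    · intro w hw hmw
      exact hstrict (htrans m₀ w m hmw (hmmin w hw))

/-- The continuous antitone separating function for a strict pair `¬ r b a` (i.e. `a ≻ b`). -/
theorem exists_sep (r : Y → Y → Prop) (hrefl : ∀ x, r x x)
    (htrans : ∀ x y z, r x y → r y z → r x z) (htotal : ∀ x y, r x y ∨ r y x)
    (hclosed : IsClosed {p : Y × Y | r p.1 p.2}) {a b : Y} (hab : ¬ r b a) :
    ∃ g : Y → ℝ, Continuous g ∧ (∀ x, g x ∈ Icc (0 : ℝ) 1) ∧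
      (∀ x y, r x y → g y ≤ g x) ∧ (∀ x, r x a → g x = 1) ∧ (∀ x, r b x → g x = 0) := by
  have hsecl : ∀ p : Y, IsClosed {z : Y | r z p} :=
    fun p => hclosed.preimage (Continuous.prodMk continuous_id continuous_const)
  have hsecr : ∀ p : Y, IsClosed {z : Y | r p z} :=
    fun p => hclosed.preimage (Continuous.prodMk continuous_const continuous_id)
  set c : OCU r :=
    { C := {z : Y | r z a}
      U := {z : Y | ¬ r b z}
      closed_C := hsecl a
      open_U := (hsecr b).isOpen_compl
      up_U := fun p q hp hqp hq => hp (htrans b q p hq hqp)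
      subset := fun z hz h => hab (htrans b z a h hz)
      hP := ocu_hP r hrefl htrans htotal hclosed }
  refine ⟨fun x => 1 - c.lim x, continuous_const.sub c.continuous_lim, ?_, ?_, ?_, ?_⟩
  · intro x
    have h := c.lim_mem_Icc x
    constructor
    · show (0 : ℝ) ≤ 1 - c.lim x
      linarith [h.2]
    · show 1 - c.lim x ≤ 1
      linarith [h.1]
  · intro x y hxy
    have h := c.lim_antitone hxy
    show 1 - c.lim y ≤ 1 - c.lim x
    linarith
  · intro x hx
    show 1 - c.lim x = 1
    rw [c.lim_of_mem_C x hx]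
    norm_num
  · intro x hx
    show 1 - c.lim x = 0
    rw [c.lim_of_nmem_U x (fun h => h hx)]
    norm_num

end CompactTotal

/-- In a compact second-countable space, there are only countably many clopen sets. -/
theorem countable_clopens (Y : Type*) [TopologicalSpace Y] [CompactSpace Y]
    [SecondCountableTopology Y] : {s : Set Y | IsClopen s}.Countable := by
  have hex : ∀ s : {s : Set Y | IsClopen s},
      ∃ t : Finset (TopologicalSpace.countableBasis Y), (s : Set Y) = (SetLike.coe t).sUnion := fun s =>
    eq_sUnion_finset_of_isTopologicalBasis_of_isCompact_open _
      (TopologicalSpace.isBasis_countableBasis Y) s.1 s.2.isClosed.isCompact s.2.isOpen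
  haveI : Countable (TopologicalSpace.countableBasis Y) :=
    (TopologicalSpace.countable_countableBasis Y).to_subtype
  rw [← Set.countable_coe_iff]
  have hf : Function.Injective (fun s : {s : Set Y | IsClopen s} => (hex s).choose) := by
    intro s t h
    have h' : (hex s).choose = (hex t).choose := h
    ext1
    rw [(hex s).choose_spec, (hex t).choose_spec, h']
  exact hf.countable

end DebreuAux

open DebreuAux

/-- **Corollary 10.** Every closed total preorder `≿` on a compact metric
space admits a continuous utility representation. Here `r x y` means
`x ≿ y`. -/
theorem exists_continuous_utility_of_closed_total_preorder
    {X : Type*} [MetricSpace X] [CompactSpace X] (r : X → X → Prop)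
    (hrefl : ∀ x, r x x)
    (htrans : ∀ x y z, r x y → r y z → r x z)
    (htotal : ∀ x y, r x y ∨ r y x)
    (hclosed : IsClosed {p : X × X | r p.1 p.2}) :
    ∃ u : X → ℝ, Continuous u ∧ ∀ x y, r x y ↔ u y ≤ u x := by
  classical
  rcases isEmpty_or_nonempty X with hX | hX
  · exact ⟨fun _ => 0, continuous_const, fun x y => (IsEmpty.false x).elim⟩
  obtain ⟨x₀⟩ := hX
  have hsecl : ∀ p : X, IsClosed {z : X | r z p} :=
    fun p => hclosed.preimage (Continuous.prodMk continuous_id continuous_const)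
  have hsecr : ∀ p : X, IsClosed {z : X | r p z} :=
    fun p => hclosed.preimage (Continuous.prodMk continuous_const continuous_id)
  -- a countable dense set
  obtain ⟨D, hDc, hDd⟩ := TopologicalSpace.exists_countable_dense X
  -- jump pairs: for each clopen set, pick a "min of V / max of Vᶜ" pair when possible
  have hJex : ∀ V : Set X, ∃ ab : X × X,
      (IsClosed V → IsClosed Vᶜ → V.Nonempty → Vᶜ.Nonempty →
        (∀ z ∈ V, r z ab.1) ∧ (∀ z ∈ Vᶜ, r ab.2 z) ∧ ab.1 ∈ V ∧ ab.2 ∈ Vᶜ) := by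
    intro V
    by_cases h : IsClosed V ∧ V.Nonempty ∧ Vᶜ.Nonempty
    · obtain ⟨a, haV, hamin⟩ := exists_bot r htrans htotal hclosed h.1 h.2.1
      by_cases h' : IsClosed Vᶜ
      · obtain ⟨b, hbV, hbmax⟩ := exists_top r htrans htotal hclosed h' h.2.2
        exact ⟨(a, b), fun _ _ _ _ => ⟨hamin, hbmax, haV, hbV⟩⟩
      · exact ⟨(x₀, x₀), fun _ h'' _ _ => absurd h'' h'⟩
    · exact ⟨(x₀, x₀), fun h1 _ h2 h3 => absurd ⟨h1, h2, h3⟩ h⟩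
  choose jpair hjpair using hJex
  -- the countable family of pairs
  set P : Set (X × X) := (D ×ˢ D) ∪ (jpair '' {V : Set X | IsClopen V}) ∪ {(x₀, x₀)} with hP
  have hPc : P.Countable := by
    refine (((hDc.prod hDc).union ?_).union (countable_singleton _))
    exact (countable_clopens X).image jpair
  have hPne : P.Nonempty := ⟨(x₀, x₀), Or.inr rfl⟩
  obtain ⟨e, he⟩ := hPc.exists_eq_range hPne
  -- coverage: every strict pair is separated by a pair in `P`
  have hjump : ∀ s t : X, ¬ r t s → (∀ w, ¬ r w s → r t w) →
      ∃ ab ∈ P, (∀ w, ¬ r t w → r w ab.1) ∧ ¬ r ab.2 ab.1 ∧ (∀ w, r t w → r ab.2 w) := by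
    intro s t hts hjmp
    set V : Set X := {w : X | ¬ r t w} with hV
    have hVopen : IsOpen V := (hsecr t).isOpen_compl
    have hVeq : V = {w : X | r w s} := by
      ext w
      constructor
      · intro hw
        by_contra h
        exact hw (hjmp w h)
      · intro hw h
        exact hts (htrans t w s h hw)
    have hVclosed : IsClosed V := by rw [hVeq]; exact hsecl s
    have hVup : Up r V := fun p q hp hqp hq => hp (htrans t q p hq hqp)
    have hVco : IsClopen V := ⟨hVclosed, hVopen⟩
    have hVne : V.Nonempty := ⟨s, hts⟩
    have hVcne : Vᶜ.Nonempty := ⟨t, not_not_intro (hrefl t)⟩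
    obtain ⟨hamin, hbmax, haV, hbV⟩ :=
      hjpair V hVclosed hVopen.isClosed_compl hVne hVcne
    refine ⟨jpair V, Or.inl (Or.inr ⟨V, hVco, rfl⟩), fun w hw => hamin w hw, ?_,
      fun w hw => hbmax w (not_not_intro hw)⟩
    intro h
    exact hbV (hVup haV h)
  have hcov : ∀ p q : X, ¬ r q p →
      ∃ ab ∈ P, r p ab.1 ∧ ¬ r ab.2 ab.1 ∧ r ab.2 q := by
    intro p q hqp
    by_cases hz : ∃ z, ¬ r z p ∧ ¬ r q z
    · obtain ⟨z, hz1, hz2⟩ := hz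
      by_cases hw : ∃ w, ¬ r w p ∧ ¬ r z w
      · by_cases hv : ∃ v, ¬ r v z ∧ ¬ r q v
        · -- dense case: pick two points of `D`
          obtain ⟨d₁, hd₁D, hd₁⟩ :=
            hDd.exists_mem_open (((hsecl p).isOpen_compl).inter ((hsecr z).isOpen_compl))
              (by obtain ⟨w, h1, h2⟩ := hw; exact ⟨w, h1, h2⟩)
          obtain ⟨d₂, hd₂D, hd₂⟩ :=
            hDd.exists_mem_open (((hsecl z).isOpen_compl).inter ((hsecr q).isOpen_compl))
              (by obtain ⟨v, h1, h2⟩ := hv; exact ⟨v, h1, h2⟩)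
          obtain ⟨hd₁p, hd₁z⟩ := hd₁
          obtain ⟨hd₂z, hd₂q⟩ := hd₂
          refine ⟨(d₁, d₂), Or.inl (Or.inl ⟨hd₁D, hd₂D⟩),
            (htotal p d₁).resolve_right hd₁p, ?_, (htotal d₂ q).resolve_right hd₂q⟩
          intro h
          exact hd₂z (htrans d₂ d₁ z h ((htotal d₁ z).resolve_right hd₁z))
        · -- jump between z and q
          push_neg at hv
          obtain ⟨ab, habP, h1, h2, h3⟩ := hjump z q hz2 hv
          exact ⟨ab, habP, h1 p hqp, h2, h3 q (hrefl q)⟩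
      · -- jump between p and z
        push_neg at hw
        obtain ⟨ab, habP, h1, h2, h3⟩ := hjump p z hz1 hw
        exact ⟨ab, habP, h1 p hz1, h2, h3 q ((htotal z q).resolve_right hz2)⟩
    · -- jump between p and q
      push_neg at hz
      obtain ⟨ab, habP, h1, h2, h3⟩ := hjump p q hqp hz
      exact ⟨ab, habP, h1 p hqp, h2, h3 q (hrefl q)⟩
  -- separating functions for every pair
  have hsepall : ∀ ab : X × X, ∃ g : X → ℝ, Continuous g ∧ (∀ x, g x ∈ Set.Icc (0 : ℝ) 1) ∧
      (∀ x y, r x y → g y ≤ g x) ∧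
      (¬ r ab.2 ab.1 → (∀ x, r x ab.1 → g x = 1) ∧ (∀ x, r ab.2 x → g x = 0)) := by
    intro ab
    by_cases h : ¬ r ab.2 ab.1
    · obtain ⟨g, hgc, hgIcc, hgmono, hg1, hg0⟩ :=
        exists_sep r hrefl htrans htotal hclosed h
      exact ⟨g, hgc, hgIcc, hgmono, fun _ => ⟨hg1, hg0⟩⟩
    · exact ⟨fun _ => 0, continuous_const, fun x => ⟨le_rfl, zero_le_one⟩,
        fun x y _ => le_rfl, fun h' => absurd h' h⟩
  choose g hgc hgIcc hgmono hgsep using hsepall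
  -- the utility function
  set u : X → ℝ := fun x => ∑' n : ℕ, (1 / 2 : ℝ) ^ n * g (e n) x with hu
  have hsummable : ∀ x : X, Summable fun n : ℕ => (1 / 2 : ℝ) ^ n * g (e n) x := by
    intro x
    refine Summable.of_nonneg_of_le (fun n => ?_) (fun n => ?_) summable_geometric_two
    · exact mul_nonneg (by positivity) (hgIcc (e n) x).1
    · calc (1 / 2 : ℝ) ^ n * g (e n) x ≤ (1 / 2 : ℝ) ^ n * 1 := by
            refine mul_le_mul_of_nonneg_left (hgIcc (e n) x).2 (by positivity)
        _ = (1 / 2 : ℝ) ^ n := mul_one _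
  have hucont : Continuous u := by
    refine continuous_tsum (fun n => continuous_const.mul (hgc (e n)))
      summable_geometric_two (fun n x => ?_)
    rw [Real.norm_eq_abs, abs_mul, abs_of_nonneg (by positivity : (0:ℝ) ≤ (1/2:ℝ)^n)]
    calc (1 / 2 : ℝ) ^ n * |g (e n) x| ≤ (1 / 2 : ℝ) ^ n * 1 := by
          refine mul_le_mul_of_nonneg_left ?_ (by positivity)
          rw [abs_le]
          exact ⟨by linarith [(hgIcc (e n) x).1], (hgIcc (e n) x).2⟩
      _ = (1 / 2 : ℝ) ^ n := mul_one _
  have humono : ∀ x y, r x y → u y ≤ u x := by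
    intro x y hxy
    exact Summable.tsum_le_tsum
      (fun n => mul_le_mul_of_nonneg_left (hgmono (e n) x y hxy) (by positivity))
      (hsummable y) (hsummable x)
  have hustrict : ∀ x y, ¬ r x y → u x < u y := by
    intro x y hxy
    obtain ⟨ab, habP, h1, h2, h3⟩ := hcov y x hxy
    rw [he] at habP
    obtain ⟨n, hn⟩ := habP
    have hyx : r y x := (htotal x y).resolve_left hxy
    refine Summable.tsum_lt_tsum_of_nonneg (i := n)
      (fun k => mul_nonneg (by positivity) (hgIcc (e k) x).1)
      (fun k => mul_le_mul_of_nonneg_left (hgmono (e k) y x hyx) (by positivity))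
      ?_ (hsummable y)
    · show (1 / 2 : ℝ) ^ n * g (e n) x < (1 / 2 : ℝ) ^ n * g (e n) y
      obtain ⟨hg1, hg0⟩ := hgsep ab h2
      rw [hn, hg0 x h3, hg1 y h1, mul_zero, mul_one]
      positivity
  refine ⟨u, hucont, fun x y => ⟨humono x y, fun h => ?_⟩⟩
  by_contra hxy
  exact absurd h (not_le_of_gt (hustrict x y hxy))
end

section
/- Let X = (X,d) be a metric space and f : X → ℝ a uniformly continuous function. Then f is Lipschitz for large distances if and only if there exist nonnegative real numbers a and b such that ω_f(t) ≤ a·t + b for every t ≥ 0, where ω_f is the modulus of continuity of f. -/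
/-- **Lemma 12.** A uniformly continuous real-valued function on a metric
space is Lipschitz for large distances if and only if its modulus of
continuity `ω_f : [0,∞) → [0,∞]` admits an affine majorant `t ↦ a·t + b` with
`a, b ≥ 0`. The modulus of continuity at `t` is formalized as the supremum in
`ℝ≥0∞` of the values `|f x - f y|` over pairs with `dist x y ≤ t`. -/
theorem lipschitzForLargeDistances_iff_affine_majorant_of_modulus
    {X : Type*} [MetricSpace X] (f : X → ℝ) (hf : UniformContinuous f) :
    (∀ δ : ℝ, 0 < δ → ∃ K : ℝ, 0 < K ∧
      ∀ x y : X, δ ≤ dist x y → |f x - f y| ≤ K * dist x y) ↔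
    ∃ a b : ℝ, 0 ≤ a ∧ 0 ≤ b ∧ ∀ t : ℝ, 0 ≤ t →
      sSup {c : ENNReal | ∃ x y : X, dist x y ≤ t ∧
          c = ENNReal.ofReal |f x - f y|} ≤ ENNReal.ofReal (a * t + b) := by
  constructor
  · intro h
    rw [Metric.uniformContinuous_iff] at hf
    obtain ⟨δ₀, hδ₀, hδ₀'⟩ := hf 1 one_pos
    obtain ⟨K, hK, hK'⟩ := h δ₀ hδ₀
    refine ⟨K, 1, hK.le, one_pos.le, fun t ht => ?_⟩
    refine sSup_le ?_
    rintro c ⟨x, y, hxy, rfl⟩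
    refine ENNReal.ofReal_le_ofReal ?_
    rcases lt_or_ge (dist x y) δ₀ with hd | hd
    · have := hδ₀' hd
      rw [Real.dist_eq] at this
      nlinarith [abs_nonneg (f x - f y)]
    · have h1 := hK' x y hd
      nlinarith [dist_nonneg (x := x) (y := y)]
  · rintro ⟨a, b, ha, hb, hab⟩ δ hδ
    refine ⟨a + b / δ + 1, by positivity, fun x y hxy => ?_⟩
    have hd : (0:ℝ) ≤ dist x y := dist_nonneg
    have h1 : ENNReal.ofReal |f x - f y| ≤ ENNReal.ofReal (a * dist x y + b) := by
      exact le_trans (le_sSup (Set.mem_setOf_eq ▸ ⟨x, y, le_refl _, rfl⟩)) (hab _ hd)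
    have h2 : |f x - f y| ≤ a * dist x y + b := by
      rw [ENNReal.ofReal_le_ofReal_iff (by positivity)] at h1
      exact h1
    have h3 : b ≤ (b / δ) * dist x y := by
      rw [div_mul_eq_mul_div, le_div_iff₀ hδ]
      nlinarith
    nlinarith
end

section
/- Let (X, d, ≽) be a radial partially ordered metric space and S a nonempty subset of X. Then for every ≽-increasing, uniformly continuous function f : S → ℝ that is Lipschitz for large distances, there exists a ≽-increasing, uniformly continuous function F : X → ℝ with F restricted to S equal to f. -/
/-- **Theorem 13.** Let `(X, d, ≽)` be a radial metric poset and `S ⊆ X`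
nonempty. Every `≽`-increasing, uniformly continuous `f : S → ℝ` that is
Lipschitz for large distances extends to an `≽`-increasing uniformly
continuous `F : X → ℝ`. Here `r x y` means `x ≽ y`. -/
theorem exists_monotone_uniformlyContinuous_extension
    {X : Type*} [MetricSpace X] (r : X → X → Prop)
    (hrefl : ∀ x, r x x)
    (htrans : ∀ x y z, r x y → r y z → r x z)
    (hantisymm : ∀ x y, r x y → r y x → x = y)
    (hrad1 : ∀ x y z, ¬ r y x → r y z ∧ y ≠ z → dist x y ≤ dist x z)
    (hrad2 : ∀ x y z, r x y ∧ x ≠ y → ¬ r z y → dist y z ≤ dist x z)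
    (S : Set X) (hS : S.Nonempty) (f : X → ℝ)
    (hmono : ∀ x ∈ S, ∀ y ∈ S, r x y → f y ≤ f x)
    (huc : UniformContinuousOn f S)
    (hlld : ∀ δ : ℝ, 0 < δ → ∃ K : ℝ, 0 < K ∧
      ∀ x ∈ S, ∀ y ∈ S, δ ≤ dist x y → |f x - f y| ≤ K * dist x y) :
    ∃ F : X → ℝ, (∀ x y, r x y → F y ≤ F x) ∧ UniformContinuous F ∧
      ∀ x ∈ S, F x = f x := by
  classical
  obtain ⟨s0, hs0⟩ := hS
  -- Combined modulus data: for each ε > 0 a slope K ε with |f a - f b| ≤ ε + K ε * d(a,b).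
  have key : ∀ ε : ℝ, 0 < ε → ∃ K : ℝ, 0 < K ∧
      ∀ a ∈ S, ∀ b ∈ S, |f a - f b| ≤ ε + K * dist a b := by
    intro ε hε
    obtain ⟨δ, hδ, hucδ⟩ := (Metric.uniformContinuousOn_iff.mp huc) ε hε
    obtain ⟨Kd, hKd, hKdf⟩ := hlld δ hδ
    refine ⟨Kd, hKd, fun a ha b hb => ?_⟩
    rcases le_or_gt δ (dist a b) with h | h
    · have h2 := hKdf a ha b hb h
      linarith
    · have h2 := hucδ a ha b hb h
      rw [Real.dist_eq] at h2
      nlinarith [dist_nonneg (x := a) (y := b)]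
  choose! K hKpos hKf using key
  set M : ℝ → Set ℝ := fun t => {y | ∃ ε : ℝ, 0 < ε ∧ y = ε + K ε * max t 0} with hM
  have hMne : ∀ t, (M t).Nonempty := fun t => ⟨1 + K 1 * max t 0, 1, one_pos, rfl⟩
  have hMbdd : ∀ t, BddBelow (M t) := by
    intro t
    refine ⟨0, ?_⟩
    rintro y ⟨ε, hε, rfl⟩
    have h1 := hKpos ε hε
    have h2 : (0:ℝ) ≤ max t 0 := le_max_right t 0
    nlinarith
  set ω : ℝ → ℝ := fun t => sInf (M t) with hω
  have ωle : ∀ t (ε : ℝ), 0 < ε → ω t ≤ ε + K ε * max t 0 :=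
    fun t ε hε => csInf_le (hMbdd t) ⟨ε, hε, rfl⟩
  have ωpos : ∀ t, 0 ≤ ω t := by
    intro t
    refine le_csInf (hMne t) ?_
    rintro y ⟨ε, hε, rfl⟩
    have h1 := hKpos ε hε
    have h2 : (0:ℝ) ≤ max t 0 := le_max_right t 0
    nlinarith
  have ωmono : ∀ t t' : ℝ, t ≤ t' → ω t ≤ ω t' := by
    intro t t' h
    refine le_csInf (hMne t') ?_
    rintro y ⟨ε, hε, rfl⟩
    refine le_trans (ωle t ε hε) ?_
    have h1 := (hKpos ε hε).le
    have h2 : max t 0 ≤ max t' 0 := max_le_max h le_rfl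
    nlinarith
  have ωzero : ω 0 = 0 := by
    refine le_antisymm ?_ (ωpos 0)
    refine le_of_forall_pos_le_add ?_
    intro ε hε
    have h := ωle 0 ε hε
    simp only [max_self, mul_zero] at h
    linarith
  have ωsub : ∀ a b : ℝ, 0 ≤ a → 0 ≤ b → ω (a + b) ≤ ω a + ω b := by
    intro a b ha hb
    have hcore : ∀ y1 ∈ M a, ∀ y2 ∈ M b, ω (a + b) ≤ y1 + y2 := by
      rintro y1 ⟨ε1, hε1, rfl⟩ y2 ⟨ε2, hε2, rfl⟩
      have hma : max a 0 = a := max_eq_left ha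
      have hmb : max b 0 = b := max_eq_left hb
      have hmab : max (a + b) 0 = a + b := max_eq_left (by linarith)
      rcases le_total (K ε1) (K ε2) with hc | hc
      · have h := ωle (a + b) ε1 hε1
        rw [hmab] at h
        rw [hma, hmb]
        nlinarith [mul_le_mul_of_nonneg_right hc hb]
      · have h := ωle (a + b) ε2 hε2
        rw [hmab] at h
        rw [hma, hmb]
        nlinarith [mul_le_mul_of_nonneg_right hc ha]
    have h1 : ∀ y1 ∈ M a, ω (a + b) - ω b ≤ y1 := by
      intro y1 hy1
      have h2 : ω (a + b) - y1 ≤ ω b := by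
        refine le_csInf (hMne b) ?_
        intro y2 hy2
        linarith [hcore y1 hy1 y2 hy2]
      linarith
    have h3 := le_csInf (hMne a) h1
    linarith
  have ωf : ∀ a ∈ S, ∀ b ∈ S, |f a - f b| ≤ ω (dist a b) := by
    intro a ha b hb
    refine le_csInf (hMne _) ?_
    rintro y ⟨ε, hε, rfl⟩
    rw [max_eq_left dist_nonneg]
    exact hKf ε hε a ha b hb
  have ωsmall : ∀ ε : ℝ, 0 < ε → ∃ δ : ℝ, 0 < δ ∧ ∀ t, 0 ≤ t → t ≤ δ → ω t ≤ ε := by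
    intro ε hε
    have hε2 : 0 < ε / 2 := by linarith
    have hK2 := hKpos (ε / 2) hε2
    refine ⟨(ε / 2) / K (ε / 2), by positivity, ?_⟩
    intro t ht htδ
    have h := ωle t (ε / 2) hε2
    rw [max_eq_left ht] at h
    rw [le_div_iff₀ hK2] at htδ
    nlinarith
  -- order-adjusted distance
  set e : X → X → ℝ := fun x s => if r x s then 0 else dist x s with he
  have e_eq_pos : ∀ x s, r x s → e x s = 0 := by
    intro x s h
    simp only [he]
    exact if_pos h
  have e_eq_neg : ∀ x s, ¬ r x s → e x s = dist x s := by
    intro x s h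
    simp only [he]
    exact if_neg h
  have e_nonneg : ∀ x s, 0 ≤ e x s := by
    intro x s
    by_cases h : r x s
    · rw [e_eq_pos x s h]
    · rw [e_eq_neg x s h]
      exact dist_nonneg
  have e_mono : ∀ x y s, r x y → e x s ≤ e y s := by
    intro x y s hxy
    rcases eq_or_ne x y with rfl | hne
    · exact le_refl _
    by_cases hxs : r x s
    · rw [e_eq_pos x s hxs]
      exact e_nonneg y s
    · have hys : ¬ r y s := fun h => hxs (htrans x y s hxy h)
      rw [e_eq_neg x s hxs, e_eq_neg y s hys]
      have h := hrad1 s x y hxs ⟨hxy, hne⟩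
      rwa [dist_comm s x, dist_comm s y] at h
  have e_tri : ∀ x x' s, e x' s ≤ dist x x' + e x s := by
    intro x x' s
    by_cases hx's : r x' s
    · rw [e_eq_pos x' s hx's]
      exact add_nonneg dist_nonneg (e_nonneg x s)
    · rw [e_eq_neg x' s hx's]
      by_cases hxs : r x s
      · rw [e_eq_pos x s hxs, add_zero]
        rcases eq_or_ne x s with rfl | hne
        · rw [dist_comm]
        · have h := hrad2 x s x' ⟨hxs, hne⟩ hx's
          rwa [dist_comm s x'] at h
      · rw [e_eq_neg x s hxs]
        have h := dist_triangle x' x s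
        rw [dist_comm x' x] at h
        linarith
  -- the extension
  set A : X → Set ℝ := fun x => {y | ∃ s ∈ S, y = f s - ω (e x s)} with hA
  have hAne : ∀ x, (A x).Nonempty := fun x => ⟨f s0 - ω (e x s0), s0, hs0, rfl⟩
  have hAbdd : ∀ x, BddAbove (A x) := by
    intro x
    refine ⟨f s0 + ω (dist x s0), ?_⟩
    rintro y ⟨s, hs, rfl⟩
    by_cases h0 : r s0 s
    · have h1 := hmono s0 hs0 s hs h0
      have h2 := ωpos (e x s)
      have h3 := ωpos (dist x s0)
      linarith
    · have h1 : f s - f s0 ≤ ω (dist s s0) :=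
        le_trans (le_abs_self _) (ωf s hs s0 hs0)
      by_cases hxs : r x s
      · rw [e_eq_pos x s hxs, ωzero]
        have h4 : dist s s0 ≤ dist x s0 := by
          rcases eq_or_ne x s with rfl | hne
          · exact le_refl _
          · exact hrad2 x s s0 ⟨hxs, hne⟩ h0
        have h5 := ωmono _ _ h4
        linarith
      · rw [e_eq_neg x s hxs]
        have h4 : dist s s0 ≤ dist x s + dist x s0 := by
          have h := dist_triangle s x s0
          rw [dist_comm s x] at h
          linarith
        have h5 := ωmono _ _ h4
        have h6 := ωsub (dist x s) (dist x s0) dist_nonneg dist_nonneg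
        linarith
  set F : X → ℝ := fun x => sSup (A x) with hF
  have hFge : ∀ x, ∀ s ∈ S, f s - ω (e x s) ≤ F x :=
    fun x s hs => le_csSup (hAbdd x) ⟨s, hs, rfl⟩
  have hFle : ∀ x (a : ℝ), (∀ s ∈ S, f s - ω (e x s) ≤ a) → F x ≤ a := by
    intro x a h
    refine csSup_le (hAne x) ?_
    rintro y ⟨s, hs, rfl⟩
    exact h s hs
  have hshift : ∀ x x', F x ≤ F x' + ω (dist x x') := by
    intro x x'
    refine hFle x _ ?_
    intro s hs
    have h1 : e x' s ≤ dist x x' + e x s := e_tri x x' s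
    have h2 : ω (e x' s) ≤ ω (dist x x') + ω (e x s) :=
      le_trans (ωmono _ _ h1) (ωsub _ _ dist_nonneg (e_nonneg x s))
    have h3 := hFge x' s hs
    linarith
  refine ⟨F, ?_, ?_, ?_⟩
  · intro x y hxy
    refine hFle y _ ?_
    intro s hs
    have h1 := ωmono _ _ (e_mono x y s hxy)
    have h2 := hFge x s hs
    linarith
  · rw [Metric.uniformContinuous_iff]
    intro ε hε
    obtain ⟨δ, hδ, hδω⟩ := ωsmall (ε / 2) (by linarith)
    refine ⟨δ, hδ, ?_⟩
    intro a b hab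
    have h1 := hshift a b
    have h2 := hshift b a
    rw [dist_comm b a] at h2
    have h3 := hδω (dist a b) dist_nonneg hab.le
    rw [Real.dist_eq, abs_sub_lt_iff]
    constructor <;> linarith
  · intro x hx
    refine le_antisymm ?_ ?_
    · refine hFle x _ ?_
      intro s hs
      by_cases hxs : r x s
      · have h1 := hmono x hx s hs hxs
        have h2 := ωpos (e x s)
        linarith
      · rw [e_eq_neg x s hxs]
        have h1 := ωf s hs x hx
        rw [dist_comm s x] at h1
        linarith [le_abs_self (f s - f x)]
    · have h := hFge x x hx
      rw [e_eq_pos x x (hrefl x), ωzero] at h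
      linarith
end

section
/- Let (X, d, ≽) be a radial partially ordered metric space and S a nonempty subset of X. Then every ≽-increasing, bounded, uniformly continuous function f : S → ℝ extends to a ≽-increasing, uniformly continuous function F : X → ℝ with F restricted to S equal to f. -/
/-- **Corollary 14.** Let `(X, d, ≽)` be a radial metric poset and `S ⊆ X`
nonempty. Every `≽`-increasing, bounded, uniformly continuous `f : S → ℝ`
extends to an `≽`-increasing uniformly continuous `F : X → ℝ`.
Here `r x y` means `x ≽ y`. -/
theorem exists_monotone_uniformlyContinuous_extension_of_bounded
    {X : Type*} [MetricSpace X] (r : X → X → Prop)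
    (hrefl : ∀ x, r x x)
    (htrans : ∀ x y z, r x y → r y z → r x z)
    (hantisymm : ∀ x y, r x y → r y x → x = y)
    (hrad1 : ∀ x y z, ¬ r y x → r y z ∧ y ≠ z → dist x y ≤ dist x z)
    (hrad2 : ∀ x y z, r x y ∧ x ≠ y → ¬ r z y → dist y z ≤ dist x z)
    (S : Set X) (hS : S.Nonempty) (f : X → ℝ)
    (hmono : ∀ x ∈ S, ∀ y ∈ S, r x y → f y ≤ f x)
    (hbdd : ∃ C : ℝ, ∀ x ∈ S, |f x| ≤ C)
    (huc : UniformContinuousOn f S) :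
    ∃ F : X → ℝ, (∀ x y, r x y → F y ≤ F x) ∧ UniformContinuous F ∧
      ∀ x ∈ S, F x = f x := by
  classical
  obtain ⟨C0, hC0⟩ := hbdd
  set C : ℝ := max C0 0 with hCdef
  have hC : ∀ x ∈ S, |f x| ≤ C := fun x hx => (hC0 x hx).trans (le_max_left _ _)
  have hCnn : (0:ℝ) ≤ C := le_max_right _ _
  -- the feasible set of affine upper bounds
  set P : ℝ → ℝ → Prop := fun a b => 0 ≤ a ∧ 0 ≤ b ∧
      ∀ x ∈ S, ∀ y ∈ S, |f x - f y| ≤ a * dist x y + b with hPdef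
  set w : ℝ → ℝ := fun t => sInf {v | ∃ a b, P a b ∧ v = a * t + b} with hwdef
  have hP0 : P 0 (2 * C) := by
    refine ⟨le_refl _, by linarith, fun x hx y hy => ?_⟩
    have h1 := hC x hx
    have h2 := hC y hy
    have := abs_sub_abs_le_abs_sub (f x) (f y)
    have := abs_sub (f x) (f y)
    calc |f x - f y| ≤ |f x| + |f y| := abs_sub _ _
      _ ≤ 0 * dist x y + 2 * C := by linarith
  have hwne : ∀ t : ℝ, {v | ∃ a b, P a b ∧ v = a * t + b}.Nonempty :=
    fun t => ⟨0 * t + 2 * C, 0, 2 * C, hP0, rfl⟩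
  have hwlb : ∀ t : ℝ, 0 ≤ t → ∀ v ∈ {v | ∃ a b, P a b ∧ v = a * t + b}, (0:ℝ) ≤ v := by
    rintro t ht v ⟨a, b, ⟨ha, hb, -⟩, rfl⟩
    have : 0 ≤ a * t := mul_nonneg ha ht
    linarith
  have hwbdd : ∀ t : ℝ, 0 ≤ t → BddBelow {v | ∃ a b, P a b ∧ v = a * t + b} :=
    fun t ht => ⟨0, fun v hv => hwlb t ht v hv⟩
  have hw_le : ∀ a b t : ℝ, P a b → 0 ≤ t → w t ≤ a * t + b :=
    fun a b t hab ht => csInf_le (hwbdd t ht) ⟨a, b, hab, rfl⟩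
  have hw_nonneg : ∀ t : ℝ, 0 ≤ t → 0 ≤ w t :=
    fun t ht => le_csInf (hwne t) (hwlb t ht)
  have hw_mono : ∀ s t : ℝ, 0 ≤ s → s ≤ t → w s ≤ w t := by
    intro s t hs hst
    refine le_csInf (hwne t) ?_
    rintro v ⟨a, b, hab, rfl⟩
    have h1 : w s ≤ a * s + b := hw_le a b s hab hs
    have h2 : a * s ≤ a * t := mul_le_mul_of_nonneg_left hst hab.1
    linarith
  have hw_bound : ∀ x ∈ S, ∀ y ∈ S, |f x - f y| ≤ w (dist x y) := by
    intro x hx y hy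
    refine le_csInf (hwne _) ?_
    rintro v ⟨a, b, hab, rfl⟩
    exact hab.2.2 x hx y hy
  -- subadditivity via concavity-style argument
  have hkey : ∀ u v : ℝ, 0 ≤ u → 0 ≤ v → 0 < u + v → (u / (u + v)) * w (u + v) ≤ w u := by
    intro u v hu hv huv
    refine le_csInf (hwne u) ?_
    rintro z ⟨a, b, hab, rfl⟩
    have h1 : w (u + v) ≤ a * (u + v) + b := hw_le a b (u + v) hab huv.le
    have hl0 : 0 ≤ u / (u + v) := div_nonneg hu huv.le
    have hl1 : u / (u + v) ≤ 1 := by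
      rw [div_le_one huv]; linarith
    have h2 : (u / (u + v)) * w (u + v) ≤ (u / (u + v)) * (a * (u + v) + b) :=
      mul_le_mul_of_nonneg_left h1 hl0
    have h3 : (u / (u + v)) * (a * (u + v) + b) = a * u + (u / (u + v)) * b := by
      field_simp
    have h4 : (u / (u + v)) * b ≤ b := by
      nlinarith [hab.2.1]
    linarith [h2, h3.le, h3.ge]
  have hw_subadd : ∀ s t : ℝ, 0 ≤ s → 0 ≤ t → w (s + t) ≤ w s + w t := by
    intro s t hs ht
    rcases eq_or_lt_of_le (add_nonneg hs ht) with h0 | hpos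
    · have hs0 : s = 0 := by linarith [hs, ht, h0]
      have ht0 : t = 0 := by linarith [hs, ht, h0]
      subst hs0; subst ht0
      have := hw_nonneg 0 le_rfl
      simpa using by linarith [hw_nonneg (0:ℝ) le_rfl]
    · have k1 := hkey s t hs ht hpos
      have k2 := hkey t s ht hs (by linarith)
      rw [add_comm t s] at k2
      have hsum : (s / (s + t)) + (t / (s + t)) = 1 := by
        field_simp
      have hcomb : (s / (s + t)) * w (s + t) + (t / (s + t)) * w (s + t) = w (s + t) := by
        rw [← add_mul, hsum, one_mul]
      linarith
  -- the extension
  set T : X → Set ℝ := fun x =>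
      {v | ∃ s ∈ S, v = if r s x then f s else f s + w (dist x s)} with hTdef
  set F : X → ℝ := fun x => sInf (T x) with hFdef
  have hg_lb : ∀ (x s : X), s ∈ S →
      -C ≤ (if r s x then f s else f s + w (dist x s)) := by
    intro x s hs
    have h1 : -C ≤ f s := by
      have := hC s hs
      have := abs_le.mp (hC s hs)
      linarith [this.1]
    by_cases h : r s x
    · simpa [h] using h1
    · have h2 : 0 ≤ w (dist x s) := hw_nonneg _ dist_nonneg
      simp only [if_neg h]
      linarith
  have hTne : ∀ x, (T x).Nonempty := by
    intro x
    obtain ⟨s, hs⟩ := hS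
    exact ⟨_, s, hs, rfl⟩
  have hTbdd : ∀ x, BddBelow (T x) := by
    intro x
    refine ⟨-C, ?_⟩
    rintro v ⟨s, hs, rfl⟩
    exact hg_lb x s hs
  have hF_le : ∀ (x s : X), s ∈ S →
      F x ≤ (if r s x then f s else f s + w (dist x s)) :=
    fun x s hs => csInf_le (hTbdd x) ⟨s, hs, rfl⟩
  have hF_ge : ∀ (x : X) (c : ℝ),
      (∀ s ∈ S, c ≤ (if r s x then f s else f s + w (dist x s))) → c ≤ F x := by
    intro x c hc
    refine le_csInf (hTne x) ?_
    rintro v ⟨s, hs, rfl⟩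
    exact hc s hs
  -- extension property
  have hext : ∀ x ∈ S, F x = f x := by
    intro x hx
    refine le_antisymm ?_ ?_
    · have := hF_le x x hx
      simpa [hrefl x] using this
    · refine hF_ge x (f x) ?_
      intro s hs
      by_cases h : r s x
      · simpa [h] using hmono s hs x hx h
      · simp only [if_neg h]
        have h1 : |f x - f s| ≤ w (dist x s) := hw_bound x hx s hs
        have := abs_le.mp h1
        linarith [this.1]
  -- monotonicity
  have hmonoF : ∀ x y, r x y → F y ≤ F x := by
    intro x y hxy
    by_cases hne : x = y
    · subst hne; exact le_rfl
    refine le_csInf (hTne x) ?_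
    rintro v ⟨s, hs, rfl⟩
    by_cases h1 : r s x
    · have h2 : r s y := htrans s x y h1 hxy
      have h5 := hF_le y s hs
      simp only [if_pos h2] at h5
      simpa [if_pos h1] using h5
    · by_cases h2 : r s y
      · have := hF_le y s hs
        simp only [if_pos h2] at this
        simp only [if_neg h1]
        have h3 : 0 ≤ w (dist x s) := hw_nonneg _ dist_nonneg
        linarith
      · have := hF_le y s hs
        simp only [if_neg h2] at this
        simp only [if_neg h1]
        have hd : dist y s ≤ dist x s := hrad2 x y s ⟨hxy, hne⟩ h2
        have h3 : w (dist y s) ≤ w (dist x s) := hw_mono _ _ dist_nonneg hd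
        linarith
  -- Lipschitz-type bound
  have hLip : ∀ x x', F x ≤ F x' + w (dist x x') := by
    intro x x'
    have : F x - w (dist x x') ≤ F x' := by
      refine le_csInf (hTne x') ?_
      rintro v ⟨s, hs, rfl⟩
      by_cases h1 : r s x'
      · simp only [if_pos h1]
        by_cases h2 : r s x
        · have := hF_le x s hs
          simp only [if_pos h2] at this
          have h3 : 0 ≤ w (dist x x') := hw_nonneg _ dist_nonneg
          linarith
        · have := hF_le x s hs
          simp only [if_neg h2] at this
          have hd : dist x s ≤ dist x x' := by
            by_cases hsx : s = x'
            · subst hsx; exact le_rfl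
            · exact hrad1 x s x' h2 ⟨h1, hsx⟩
          have h3 : w (dist x s) ≤ w (dist x x') := hw_mono _ _ dist_nonneg hd
          linarith
      · simp only [if_neg h1]
        by_cases h2 : r s x
        · have := hF_le x s hs
          simp only [if_pos h2] at this
          have h3 : 0 ≤ w (dist x x') := hw_nonneg _ dist_nonneg
          have h4 : 0 ≤ w (dist x' s) := hw_nonneg _ dist_nonneg
          linarith
        · have := hF_le x s hs
          simp only [if_neg h2] at this
          have hd : dist x s ≤ dist x x' + dist x' s := dist_triangle x x' s
          have h3 : w (dist x s) ≤ w (dist x x' + dist x' s) :=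
            hw_mono _ _ dist_nonneg hd
          have h4 : w (dist x x' + dist x' s) ≤ w (dist x x') + w (dist x' s) :=
            hw_subadd _ _ dist_nonneg dist_nonneg
          linarith
    linarith
  have habs : ∀ x x', |F x - F x'| ≤ w (dist x x') := by
    intro x x'
    have h1 := hLip x x'
    have h2 := hLip x' x
    rw [dist_comm x' x] at h2
    rw [abs_sub_le_iff]
    constructor <;> linarith
  -- uniform continuity
  have hucF : UniformContinuous F := by
    rw [Metric.uniformContinuous_iff]
    intro ε hε
    -- get a feasible pair with small constant term
    rw [Metric.uniformContinuousOn_iff] at huc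
    obtain ⟨δ, hδ, hδ2⟩ := huc (ε / 2) (by linarith)
    set a : ℝ := (2 * C + 1) / δ with hadef
    have ha : 0 ≤ a := div_nonneg (by linarith) hδ.le
    have hPa : P a (ε / 2) := by
      refine ⟨ha, by linarith, fun x hx y hy => ?_⟩
      by_cases hd : dist x y < δ
      · have := hδ2 x hx y hy hd
        rw [Real.dist_eq] at this
        have h0 : 0 ≤ a * dist x y := mul_nonneg ha dist_nonneg
        linarith
      · push_neg at hd
        have h1 : |f x - f y| ≤ 2 * C := by
          have := hC x hx; have := hC y hy
          calc |f x - f y| ≤ |f x| + |f y| := abs_sub _ _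
            _ ≤ 2 * C := by linarith [hC x hx, hC y hy]
        have h2 : a * δ = 2 * C + 1 := by
          rw [hadef]
          exact div_mul_cancel₀ _ hδ.ne'
        have h3 : a * δ ≤ a * dist x y := mul_le_mul_of_nonneg_left hd ha
        linarith
    refine ⟨min δ ((ε / 2) / (a + 1)), lt_min hδ (by positivity), ?_⟩
    intro x x' hxx'
    have hd1 : dist x x' < (ε / 2) / (a + 1) := lt_of_lt_of_le hxx' (min_le_right _ _)
    have h1 : |F x - F x'| ≤ w (dist x x') := habs x x'
    have h2 : w (dist x x') ≤ a * dist x x' + ε / 2 := hw_le a (ε / 2) _ hPa dist_nonneg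
    have h3 : dist x x' * (a + 1) < ε / 2 := by
      rw [← lt_div_iff₀ (by positivity)]
      exact hd1
    have h4 : a * dist x x' ≤ dist x x' * (a + 1) := by
      nlinarith [dist_nonneg (x := x) (y := x'), ha]
    rw [Real.dist_eq]
    linarith
  exact ⟨F, hmonoF, hucF, hext⟩
end

section
/- Let (X, d, ≽) be a radial partially ordered metric space and S a nonempty compact subset of X. Then for every ≽-increasing continuous function f : S → ℝ, there exists a ≽-increasing uniformly continuous function F : X → ℝ with F restricted to S equal to f. -/
open Classical in
/-- Order-compatible one-sided distance. -/
noncomputable def radialE {X : Type*} [MetricSpace X] (r : X → X → Prop) (x s : X) : ℝ :=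
  if r s x then 0 else dist x s

/-- Good slope/offset pairs for the extension. -/
def radialGood {X : Type*} [MetricSpace X] (S : Set X) (f : X → ℝ) (p : ℝ × ℝ) : Prop :=
  0 ≤ p.1 ∧ 0 ≤ p.2 ∧ ∀ a ∈ S, ∀ b ∈ S, f a ≤ f b + p.2 + p.1 * dist a b

/-- **Corollary 15.** Let `(X, d, ≽)` be a radial metric poset and `S ⊆ X`
nonempty and compact. Every `≽`-increasing continuous `f : X → ℝ` extends to
an `≽`-increasing uniformly continuous `F : X → ℝ`. Here `r x y` means
`x ≽ y`. -/
theorem exists_monotone_uniformlyContinuous_extension_of_compact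
    {X : Type*} [MetricSpace X] (r : X → X → Prop)
    (hrefl : ∀ x, r x x)
    (htrans : ∀ x y z, r x y → r y z → r x z)
    (hantisymm : ∀ x y, r x y → r y x → x = y)
    (hrad1 : ∀ x y z, ¬ r y x → r y z ∧ y ≠ z → dist x y ≤ dist x z)
    (hrad2 : ∀ x y z, r x y ∧ x ≠ y → ¬ r z y → dist y z ≤ dist x z)
    (S : Set X) (hS : S.Nonempty) (hScomp : IsCompact S) (f : X → ℝ)
    (hmono : ∀ x ∈ S, ∀ y ∈ S, r x y → f y ≤ f x)
    (hcont : ContinuousOn f S) :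
    ∃ F : X → ℝ, (∀ x y, r x y → F y ≤ F x) ∧ UniformContinuous F ∧
      ∀ x ∈ S, F x = f x := by
  classical
  set e : X → X → ℝ := radialE r with he
  set Good : ℝ × ℝ → Prop := radialGood S f with hGood
  -- basic facts about e
  have e_nonneg : ∀ x s, 0 ≤ e x s := by
    intro x s
    simp only [he, radialE]
    split <;> [rfl; exact dist_nonneg]
  have e_self : ∀ x, e x x = 0 := by
    intro x; simp only [he, radialE, if_pos (hrefl x)]
  have e_le_dist : ∀ x s, e x s ≤ dist x s := by
    intro x s
    simp only [he, radialE]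
    split <;> [exact dist_nonneg; rfl]
  -- e is antitone in the first argument along r
  have e_mono : ∀ x y s, r x y → e y s ≤ e x s := by
    intro x y s hxy
    by_cases hxy' : x = y
    · subst hxy'; rfl
    by_cases h1 : r s y
    · rw [show e y s = 0 from if_pos h1]; exact e_nonneg x s
    · have h2 : ¬ r s x := fun h => h1 (htrans s x y h hxy)
      rw [show e y s = dist y s from if_neg h1, show e x s = dist x s from if_neg h2]
      exact hrad2 x y s ⟨hxy, hxy'⟩ h1
  -- e satisfies a triangle-type inequality
  have e_tri : ∀ x x' s, e x' s ≤ e x s + dist x x' := by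
    intro x x' s
    by_cases h' : r s x'
    · rw [show e x' s = 0 from if_pos h']
      exact add_nonneg (e_nonneg x s) dist_nonneg
    rw [show e x' s = dist x' s from if_neg h']
    by_cases h : r s x
    · rw [show e x s = 0 from if_pos h, zero_add]
      by_cases hsx : s = x
      · rw [hsx, dist_comm]
      · have := hrad1 x' s x h' ⟨h, hsx⟩
        calc dist x' s ≤ dist x' x := this
          _ = dist x x' := dist_comm _ _
    · rw [show e x s = dist x s from if_neg h]
      calc dist x' s ≤ dist x' x + dist x s := dist_triangle _ _ _
        _ = dist x s + dist x x' := by rw [dist_comm x' x]; ring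
  -- bounds on f over S
  obtain ⟨xm, hxmS, hxm⟩ := hScomp.exists_isMinOn hS hcont
  obtain ⟨xM, hxMS, hxM⟩ := hScomp.exists_isMaxOn hS hcont
  have hfm : ∀ a ∈ S, f xm ≤ f a := fun a ha => hxm ha
  have hfM : ∀ a ∈ S, f a ≤ f xM := fun a ha => hxM ha
  -- a basic good pair
  have good0 : Good (0, (f xM - f xm) ⊔ 0) := by
    refine ⟨le_refl 0, le_max_right _ _, fun a ha b hb => ?_⟩
    have : f a - f b ≤ f xM - f xm := sub_le_sub (hfM a ha) (hfm b hb)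
    have h2 : f a - f b ≤ (f xM - f xm) ⊔ 0 := this.trans (le_max_left _ _)
    simp only
    nlinarith
  -- the candidate sets and extension
  set A : X → Set ℝ := fun x => {v | ∃ s ∈ S, ∃ p : ℝ × ℝ, Good p ∧ v = f s + p.2 + p.1 * e x s}
    with hA
  have Ane : ∀ x, (A x).Nonempty := by
    intro x
    obtain ⟨s, hs⟩ := hS
    exact ⟨_, s, hs, (0, (f xM - f xm) ⊔ 0), good0, rfl⟩
  have Abdd : ∀ x, BddBelow (A x) := by
    intro x
    refine ⟨f xm, fun v hv => ?_⟩
    obtain ⟨s, hs, p, ⟨hp1, hp2, _⟩, rfl⟩ := hv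
    have := hfm s hs
    nlinarith [e_nonneg x s, mul_nonneg hp1 (e_nonneg x s)]
  set F : X → ℝ := fun x => sInf (A x) with hF
  -- membership helper
  have memA : ∀ x, ∀ s ∈ S, ∀ p : ℝ × ℝ, Good p → f s + p.2 + p.1 * e x s ∈ A x :=
    fun x s hs p hp => ⟨s, hs, p, hp, rfl⟩
  -- combining good pairs
  have good_comb : ∀ p q : ℝ × ℝ, Good p → Good q →
      Good (min p.1 q.1, p.2 + q.2) := by
    rintro p q ⟨hp1, hp2, hp3⟩ ⟨hq1, hq2, hq3⟩
    refine ⟨le_min hp1 hq1, add_nonneg hp2 hq2, fun a ha b hb => ?_⟩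
    rcases min_cases p.1 q.1 with ⟨hm, _⟩ | ⟨hm, _⟩
    · have := hp3 a ha b hb; simp only [hm]; nlinarith
    · have := hq3 a ha b hb; simp only [hm]; nlinarith
  -- good pairs with arbitrarily small offset
  have good_small : ∀ η : ℝ, 0 < η → ∃ p : ℝ × ℝ, Good p ∧ p.2 ≤ η := by
    intro η hη
    have huc : UniformContinuousOn f S := hScomp.uniformContinuousOn_of_continuous hcont
    rw [Metric.uniformContinuousOn_iff] at huc
    obtain ⟨δ, hδ, hδ'⟩ := huc η hη
    set L : ℝ := ((f xM - f xm) ⊔ 0) / δ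
    refine ⟨(L, η), ⟨div_nonneg (le_max_right _ _) hδ.le, hη.le, fun a ha b hb => ?_⟩, le_refl _⟩
    by_cases hd : dist a b < δ
    · have := hδ' a ha b hb hd
      rw [Real.dist_eq] at this
      have h1 : f a - f b ≤ η := le_of_lt ((le_abs_self _).trans_lt this)
      have h2 : 0 ≤ L * dist a b := mul_nonneg (div_nonneg (le_max_right _ _) hδ.le) dist_nonneg
      simp only; nlinarith
    · push_neg at hd
      have h1 : f a - f b ≤ (f xM - f xm) ⊔ 0 :=
        (sub_le_sub (hfM a ha) (hfm b hb)).trans (le_max_left _ _)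
      have h2 : (f xM - f xm) ⊔ 0 ≤ L * dist a b := by
        have hLδ : L * δ = (f xM - f xm) ⊔ 0 := div_mul_cancel₀ _ hδ.ne'
        have hL0 : 0 ≤ L := div_nonneg (le_max_right _ _) hδ.le
        have := mul_le_mul_of_nonneg_left hd hL0
        linarith
      simp only; nlinarith
  -- key uniform estimate: F x ≤ F y + p.2 + p.1 * dist x y for good p
  have key : ∀ p : ℝ × ℝ, Good p → ∀ x y : X, F x ≤ F y + p.2 + p.1 * dist x y := by
    intro p hp x y
    have : F x - (p.2 + p.1 * dist x y) ≤ F y := by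
      refine le_csInf (Ane y) ?_
      rintro v ⟨s, hs, q, hq, rfl⟩
      have hcomb := good_comb q p hq hp
      have hmem := memA x s hs _ hcomb
      have h1 : F x ≤ f s + (q.2 + p.2) + min q.1 p.1 * e x s := csInf_le (Abdd x) hmem
      have h2 : e x s ≤ e y s + dist y x := e_tri y x s
      have h3 : min q.1 p.1 * e x s ≤ q.1 * e y s + p.1 * dist x y := by
        have hmq : min q.1 p.1 ≤ q.1 := min_le_left _ _
        have hmp : min q.1 p.1 ≤ p.1 := min_le_right _ _
        have hm0 : 0 ≤ min q.1 p.1 := le_min hq.1 hp.1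
        calc min q.1 p.1 * e x s ≤ min q.1 p.1 * (e y s + dist y x) :=
              mul_le_mul_of_nonneg_left h2 hm0
          _ = min q.1 p.1 * e y s + min q.1 p.1 * dist y x := by ring
          _ ≤ q.1 * e y s + p.1 * dist y x :=
              add_le_add (mul_le_mul_of_nonneg_right hmq (e_nonneg y s))
                (mul_le_mul_of_nonneg_right hmp dist_nonneg)
          _ = q.1 * e y s + p.1 * dist x y := by rw [dist_comm]
      linarith
    linarith
  refine ⟨F, ?_, ?_, ?_⟩
  · -- monotone
    intro x y hxy
    refine le_csInf (Ane x) ?_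
    rintro v ⟨s, hs, p, hp, rfl⟩
    have h1 : F y ≤ f s + p.2 + p.1 * e y s := csInf_le (Abdd y) (memA y s hs p hp)
    have h2 : p.1 * e y s ≤ p.1 * e x s :=
      mul_le_mul_of_nonneg_left (e_mono x y s hxy) hp.1
    linarith
  · -- uniformly continuous
    rw [Metric.uniformContinuous_iff]
    intro ε hε
    obtain ⟨p, hp, hp2⟩ := good_small (ε / 3) (by linarith)
    have hp1 : 0 ≤ p.1 := hp.1
    refine ⟨ε / (3 * (p.1 + 1)), by positivity, fun {x y} hxy => ?_⟩
    have hbound : ∀ a b : X, dist a b < ε / (3 * (p.1 + 1)) → F a - F b ≤ 2 * ε / 3 := by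
      intro a b hab
      have h1 := key p hp a b
      have h2 : p.1 * dist a b ≤ p.1 * (ε / (3 * (p.1 + 1))) :=
        mul_le_mul_of_nonneg_left hab.le hp1
      have h3 : p.1 * (ε / (3 * (p.1 + 1))) ≤ ε / 3 := by
        rw [mul_div_assoc', div_le_div_iff₀ (by positivity) (by norm_num)]
        nlinarith
      linarith
    rw [Real.dist_eq, abs_sub_lt_iff]
    constructor
    · have := hbound x y hxy; linarith
    · have := hbound y x (by rwa [dist_comm]); linarith
  · -- extends f
    intro x hx
    apply le_antisymm
    · -- F x ≤ f x
      refine le_of_forall_pos_le_add (fun η hη => ?_)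
      obtain ⟨p, hp, hp2⟩ := good_small η hη
      have h1 : F x ≤ f x + p.2 + p.1 * e x x := csInf_le (Abdd x) (memA x x hx p hp)
      rw [e_self x] at h1
      have : p.1 * 0 = 0 := mul_zero _
      linarith
    · -- f x ≤ F x
      refine le_csInf (Ane x) ?_
      rintro v ⟨s, hs, p, ⟨hp1, hp2, hp3⟩, rfl⟩
      by_cases hsx : r s x
      · have h1 : f x ≤ f s := hmono s hs x hx hsx
        have h2 : 0 ≤ p.1 * e x s := mul_nonneg hp1 (e_nonneg x s)
        linarith
      · have h1 : e x s = dist x s := if_neg hsx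
        have h2 := hp3 x hx s hs
        rw [h1]; linarith
end
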